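/- arXiv:1205.4603 — 2 statements merged into one kernel-verified Lean document; each statement's English description precedes it below -/
import Mathlib

section
/- Let p ≥ 3 be a prime and let 3 ≤ r < s be integers with (r-1) ∤ (s-1), and let g be the least positive residue of s-1 modulo r-1. Suppose d ∈ Biv*(s,r) satisfies h_p(δ^{-1}(d)) = min h_p and 2g ≤ r-2. Then θ_max(d) = 1; that is, every maximal block of consecutive entries [q+1] in d is a singleton, so d contains exactly g entries [q+1], no two of them adjacent, and d contains exactly g+1 maximal [q]-blocks, whose average length is q_1 = (r-g-1)/(g+1). -/
/-- `A(s,r)`: admissible exponent tuples, viewed as functions `ℕ → ℤ` whose relevant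
entries are indices `0,…,r-1`: strictly increasing with `a 0 = 0` and `a (r-1) = s-1`. -/
def Admissible (s r : ℕ) (a : ℕ → ℤ) : Prop :=
  a 0 = 0 ∧ a (r - 1) = (s : ℤ) - 1 ∧ ∀ i, i + 1 < r → a i < a (i + 1)

/-- `h_p(x) = Σ_{k<i≤r} p^{-(x_i - x_k)}` (indices `0,…,r-1`). -/
noncomputable def hp (p r : ℕ) (a : ℕ → ℤ) : ℝ :=
  ∑ k ∈ Finset.range r, ∑ i ∈ Finset.range r,
    if k < i then (p : ℝ) ^ (a k - a i) else 0

/-- `δ⁻¹(d) = (0, d₁, d₁+d₂, …)`: the exponent tuple with delta vector `d`. -/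
def deltaInv (d : ℕ → ℤ) (i : ℕ) : ℤ := ∑ j ∈ Finset.range i, d j

/-- `IsMaxRun n d v i l`: within the vector `(d 0, …, d (n-1))`, the entries
`d i, …, d (i+l-1)` form a maximal block of consecutive entries equal to `v`
(of length `l ≥ 1`). -/
def IsMaxRun (n : ℕ) (d : ℕ → ℤ) (v : ℤ) (i l : ℕ) : Prop :=
  0 < l ∧ i + l ≤ n ∧ (∀ k < l, d (i + k) = v) ∧
    (0 < i → d (i - 1) ≠ v) ∧ (i + l < n → d (i + l) ≠ v)

/-! ### Analytic infrastructure -/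

open Finset

noncomputable def xv (p : ℕ) (d : ℕ → ℤ) (j : ℕ) : ℝ := (p : ℝ) ^ (-(d j))

noncomputable def Lp (p : ℕ) (d : ℕ → ℤ) (m : ℕ) : ℝ :=
  ∑ k ∈ range m, ∏ j ∈ Ico k m, xv p d j

noncomputable def Rp (p r : ℕ) (d : ℕ → ℤ) (k : ℕ) : ℝ :=
  ∑ i ∈ Ico (k + 1) r, ∏ j ∈ Ico k i, xv p d j

noncomputable def GG (p r : ℕ) (d : ℕ → ℤ) : ℝ := ∑ i ∈ range r, Lp p d i

lemma zpow_sum_eq (c : ℝ) (hc : c ≠ 0) (s : Finset ℕ) (f : ℕ → ℤ) :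
    c ^ (∑ j ∈ s, f j) = ∏ j ∈ s, c ^ f j := by
  induction s using Finset.cons_induction with
  | empty => simp
  | cons a s ha ih => rw [Finset.sum_cons, Finset.prod_cons, zpow_add₀ hc, ih]

lemma hp_deltaInv (p r : ℕ) (hp0 : (p : ℝ) ≠ 0) (d : ℕ → ℤ) :
    hp p r (deltaInv d) = GG p r d := by
  unfold hp GG Lp
  rw [Finset.sum_comm]
  refine Finset.sum_congr rfl fun i hi => ?_
  rw [← Finset.sum_filter]
  have hfil : (range r).filter (fun k => k < i) = range i := by
    ext k; simp only [Finset.mem_filter, Finset.mem_range] at *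
    omega
  rw [hfil]
  refine Finset.sum_congr rfl fun k hk => ?_
  have hki : k ≤ i := le_of_lt (Finset.mem_range.mp hk)
  have h1 : deltaInv d k - deltaInv d i = ∑ j ∈ Ico k i, (-(d j)) := by
    rw [Finset.sum_neg_distrib, Finset.sum_Ico_eq_sub _ hki]
    unfold deltaInv; ring
  rw [h1, zpow_sum_eq _ hp0]
  rfl


/-! ### Lp/Rp recursions and bounds -/

lemma Lp_zero (p : ℕ) (d : ℕ → ℤ) : Lp p d 0 = 0 := by simp [Lp]

lemma Lp_succ (p : ℕ) (d : ℕ → ℤ) (m : ℕ) :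
    Lp p d (m + 1) = xv p d m * (1 + Lp p d m) := by
  unfold Lp
  have h1 : ∀ k ∈ range (m + 1), (∏ j ∈ Ico k (m + 1), xv p d j)
      = (∏ j ∈ Ico k m, xv p d j) * xv p d m := by
    intro k hk
    have : k ≤ m := by have := Finset.mem_range.mp hk; omega
    rw [Finset.prod_Ico_succ_top this]
  rw [Finset.sum_congr rfl h1, ← Finset.sum_mul, Finset.sum_range_succ]
  simp [mul_comm, mul_add, add_comm]

lemma Rp_eq_zero (p r : ℕ) (d : ℕ → ℤ) (k : ℕ) (h : r ≤ k + 1) : Rp p r d k = 0 := by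
  unfold Rp
  rw [Finset.Ico_eq_empty (by omega)]
  simp

lemma Rp_succ (p r : ℕ) (d : ℕ → ℤ) (k : ℕ) (h : k + 1 < r) :
    Rp p r d k = xv p d k * (1 + Rp p r d (k + 1)) := by
  unfold Rp
  have h1 : ∀ i ∈ Ico (k + 1) r, (∏ j ∈ Ico k i, xv p d j)
      = xv p d k * ∏ j ∈ Ico (k + 1) i, xv p d j := by
    intro i hi
    have : k < i := by have := (Finset.mem_Ico.mp hi).1; omega
    rw [Finset.prod_eq_prod_Ico_succ_bot this]
  rw [Finset.sum_congr rfl h1, ← Finset.mul_sum]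
  congr 1
  rw [Finset.sum_eq_sum_Ico_succ_bot h]
  simp

lemma xv_pos (p : ℕ) (hp : 0 < p) (d : ℕ → ℤ) (j : ℕ) : 0 < xv p d j :=
  zpow_pos (by exact_mod_cast hp) _

lemma prod_xv_pos (p : ℕ) (hp : 0 < p) (d : ℕ → ℤ) (s : Finset ℕ) :
    0 < ∏ j ∈ s, xv p d j :=
  Finset.prod_pos fun j _ => xv_pos p hp d j

lemma Lp_nonneg (p : ℕ) (hp : 0 < p) (d : ℕ → ℤ) (m : ℕ) : 0 ≤ Lp p d m :=
  Finset.sum_nonneg fun k _ => le_of_lt (prod_xv_pos p hp d _)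

lemma Rp_nonneg (p r : ℕ) (hp : 0 < p) (d : ℕ → ℤ) (k : ℕ) : 0 ≤ Rp p r d k :=
  Finset.sum_nonneg fun i _ => le_of_lt (prod_xv_pos p hp d _)

lemma Lp_pos (p : ℕ) (hp : 0 < p) (d : ℕ → ℤ) (m : ℕ) : 0 < Lp p d (m + 1) := by
  rw [Lp_succ]
  have := xv_pos p hp d m
  nlinarith [Lp_nonneg p hp d m]

lemma Rp_pos (p r : ℕ) (hp : 0 < p) (d : ℕ → ℤ) (k : ℕ) (h : k + 1 < r) :
    0 < Rp p r d k := by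
  rw [Rp_succ _ _ _ _ h]
  have := xv_pos p hp d k
  nlinarith [Rp_nonneg p r hp d (k + 1)]

lemma xv_le_third (p : ℕ) (hp3 : 3 ≤ p) (d : ℕ → ℤ) (j : ℕ) (hd : 1 ≤ d j) :
    xv p d j ≤ 3⁻¹ := by
  have hp1n : (1 : ℕ) ≤ p := by omega
  have hp1 : (1 : ℝ) ≤ (p : ℝ) := by exact_mod_cast hp1n
  have h1 : xv p d j ≤ (p : ℝ) ^ (-1 : ℤ) := zpow_le_zpow_right₀ hp1 (by
    simp only [neg_le_neg_iff]; exact_mod_cast hd)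
  have h2 : ((p : ℝ))⁻¹ ≤ 3⁻¹ := by
    apply inv_anti₀ (by norm_num)
    exact_mod_cast hp3
  calc xv p d j ≤ (p : ℝ) ^ (-1 : ℤ) := h1
    _ = (p : ℝ)⁻¹ := by simp
    _ ≤ 3⁻¹ := h2

lemma Lp_le_half (p : ℕ) (hp3 : 3 ≤ p) (d : ℕ → ℤ) (n : ℕ)
    (hd : ∀ j < n, 1 ≤ d j) : ∀ m ≤ n, Lp p d m ≤ 2⁻¹ := by
  intro m
  induction m with
  | zero => intro _; rw [Lp_zero]; norm_num
  | succ m ih =>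
    intro hm
    rw [Lp_succ]
    have h1 : Lp p d m ≤ 2⁻¹ := ih (by omega)
    have h2 : xv p d m ≤ 3⁻¹ := xv_le_third p hp3 d m (hd m (by omega))
    have h3 : 0 < xv p d m := xv_pos p (by omega) d m
    nlinarith

lemma Rp_le_half (p r : ℕ) (hp3 : 3 ≤ p) (d : ℕ → ℤ) (n : ℕ) (hn : n + 1 = r)
    (hd : ∀ j < n, 1 ≤ d j) : ∀ k, Rp p r d k ≤ 2⁻¹ := by
  intro k
  suffices h : ∀ t k, r - k = t → Rp p r d k ≤ 2⁻¹ from h (r - k) k rfl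
  intro t
  induction t with
  | zero => intro k hk; rw [Rp_eq_zero _ _ _ _ (by omega)]; norm_num
  | succ t ih =>
    intro k hk
    by_cases h : k + 1 < r
    · rw [Rp_succ _ _ _ _ h]
      have h1 : Rp p r d (k + 1) ≤ 2⁻¹ := ih (k + 1) (by omega)

      have h2 : xv p d k ≤ 3⁻¹ := xv_le_third p hp3 d k (hd k (by omega))
      have h3 : 0 < xv p d k := xv_pos p (by omega) d k
      nlinarith
    · rw [Rp_eq_zero _ _ _ _ (by omega)]; norm_num

/-! ### Swap formula -/

def swapd (d : ℕ → ℤ) (m : ℕ) : ℕ → ℤ :=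
  fun j => if j = m then d (m + 1) else if j = m + 1 then d m else d j

lemma swapd_ne (d : ℕ → ℤ) (m j : ℕ) (h1 : j ≠ m) (h2 : j ≠ m + 1) :
    swapd d m j = d j := by simp [swapd, h1, h2]

lemma xv_swapd_ne (p : ℕ) (d : ℕ → ℤ) (m j : ℕ) (h1 : j ≠ m) (h2 : j ≠ m + 1) :
    xv p (swapd d m) j = xv p d j := by unfold xv; rw [swapd_ne d m j h1 h2]

lemma xv_swapd_m (p : ℕ) (d : ℕ → ℤ) (m : ℕ) :
    xv p (swapd d m) m = xv p d (m + 1) := by simp [xv, swapd]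

lemma xv_swapd_m1 (p : ℕ) (d : ℕ → ℤ) (m : ℕ) :
    xv p (swapd d m) (m + 1) = xv p d m := by simp [xv, swapd]

lemma prod_Ico_split4 (f : ℕ → ℝ) (k m i : ℕ) (hk : k ≤ m) (hi : m + 2 ≤ i) :
    ∏ j ∈ Ico k i, f j
      = (∏ j ∈ Ico k m, f j) * f m * f (m + 1) * ∏ j ∈ Ico (m + 2) i, f j := by
  rw [← Finset.prod_Ico_consecutive f hk (by omega : m ≤ i),
    Finset.prod_eq_prod_Ico_succ_bot (show m < i by omega),
    Finset.prod_eq_prod_Ico_succ_bot (show m + 1 < i by omega)]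
  ring

lemma Lp_swapd_le (p : ℕ) (d : ℕ → ℤ) (m i : ℕ) (hi : i ≤ m) :
    Lp p (swapd d m) i = Lp p d i := by
  unfold Lp
  refine Finset.sum_congr rfl fun k hk => Finset.prod_congr rfl fun j hj => ?_
  have hj2 := Finset.mem_Ico.mp hj
  exact xv_swapd_ne p d m j (by omega) (by omega)

lemma Lp_swapd_m1 (p : ℕ) (hp : 0 < p) (d : ℕ → ℤ) (m : ℕ) :
    Lp p (swapd d m) (m + 1) = xv p d (m + 1) * (1 + Lp p d m) := by
  rw [Lp_succ, xv_swapd_m]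
  congr 2
  unfold Lp
  refine Finset.sum_congr rfl fun k hk => Finset.prod_congr rfl fun j hj => ?_
  have hj2 := Finset.mem_Ico.mp hj
  exact xv_swapd_ne p d m j (by omega) (by omega)

lemma Lp_swapd_ge (p : ℕ) (d : ℕ → ℤ) (m i : ℕ) (hi : m + 2 ≤ i) :
    Lp p (swapd d m) i
      = Lp p d i + (xv p d m - xv p d (m + 1)) * ∏ j ∈ Ico (m + 2) i, xv p d j := by
  unfold Lp
  have key : ∀ k ∈ range i, (∏ j ∈ Ico k i, xv p (swapd d m) j)
      = (∏ j ∈ Ico k i, xv p d j)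
        + (if k = m + 1 then (xv p d m - xv p d (m + 1)) * ∏ j ∈ Ico (m + 2) i, xv p d j
           else 0) := by
    intro k hk
    rcases Nat.lt_or_ge k (m + 1) with h | h
    · -- k ≤ m : contains both m and m+1
      rw [if_neg (by omega), add_zero]
      rw [prod_Ico_split4 _ k m i (by omega) hi, prod_Ico_split4 _ k m i (by omega) hi,
        xv_swapd_m, xv_swapd_m1]
      have e1 : (∏ j ∈ Ico k m, xv p (swapd d m) j) = ∏ j ∈ Ico k m, xv p d j := by
        refine Finset.prod_congr rfl fun j hj => ?_
        have hj2 := Finset.mem_Ico.mp hj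
        exact xv_swapd_ne p d m j (by omega) (by omega)
      have e2 : (∏ j ∈ Ico (m + 2) i, xv p (swapd d m) j) = ∏ j ∈ Ico (m + 2) i, xv p d j := by
        refine Finset.prod_congr rfl fun j hj => ?_
        have hj2 := Finset.mem_Ico.mp hj
        exact xv_swapd_ne p d m j (by omega) (by omega)
      rw [e1, e2]; ring
    · have e2 : (∏ j ∈ Ico (m + 2) i, xv p (swapd d m) j) = ∏ j ∈ Ico (m + 2) i, xv p d j := by
        refine Finset.prod_congr rfl fun j hj => ?_
        have hj2 := Finset.mem_Ico.mp hj
        exact xv_swapd_ne p d m j (by omega) (by omega)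
      rcases Nat.eq_or_lt_of_le h with h' | h'
      · -- k = m+1
        rw [if_pos h'.symm, ← h']
        rw [Finset.prod_eq_prod_Ico_succ_bot (show m + 1 < i by omega),
          Finset.prod_eq_prod_Ico_succ_bot (show m + 1 < i by omega), xv_swapd_m1, e2]
        ring
      · -- k ≥ m+2
        rw [if_neg (by omega), add_zero]
        refine Finset.prod_congr rfl fun j hj => ?_
        have hj2 := Finset.mem_Ico.mp hj
        exact xv_swapd_ne p d m j (by omega) (by omega)
  rw [Finset.sum_congr rfl key, Finset.sum_add_distrib]
  congr 1
  rw [Finset.sum_ite_eq' (range i) (m + 1), if_pos (Finset.mem_range.mpr (by omega))]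

lemma GG_swapd (p r : ℕ) (hp : 0 < p) (d : ℕ → ℤ) (m : ℕ) (hm : m + 2 < r) :
    GG p r (swapd d m)
      = GG p r d + (xv p d (m + 1) - xv p d m) * (Lp p d m - Rp p r d (m + 2)) := by
  unfold GG
  have key : ∀ i ∈ range r, Lp p (swapd d m) i
      = Lp p d i + (if i = m + 1 then (xv p d (m + 1) - xv p d m) * (1 + Lp p d m)
          else if m + 2 ≤ i then (xv p d m - xv p d (m + 1)) * ∏ j ∈ Ico (m + 2) i, xv p d j
          else 0) := by
    intro i hi
    rcases Nat.lt_or_ge i (m + 1) with h | h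
    · rw [if_neg (by omega), if_neg (by omega), add_zero,
        Lp_swapd_le p d m i (by omega)]
    · rcases Nat.eq_or_lt_of_le h with h' | h'
      · rw [if_pos h'.symm, ← h', Lp_swapd_m1 p hp d m, Lp_succ]
        ring
      · rw [if_neg (by omega), if_pos (by omega), Lp_swapd_ge p d m i (by omega)]
  rw [Finset.sum_congr rfl key, Finset.sum_add_distrib]
  congr 1
  have hsplit : range r = range (m + 2) ∪ Ico (m + 2) r := by
    rw [Finset.range_eq_Ico, Finset.range_eq_Ico]
    exact (Finset.Ico_union_Ico_eq_Ico (show 0 ≤ m + 2 by omega) (show m + 2 ≤ r by omega)).symm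
  rw [hsplit, Finset.sum_union (by
    rw [Finset.range_eq_Ico]
    exact Finset.Ico_disjoint_Ico_consecutive 0 (m + 2) r)]
  have e1 : ∑ i ∈ range (m + 2), (if i = m + 1 then (xv p d (m + 1) - xv p d m) * (1 + Lp p d m)
      else if m + 2 ≤ i then (xv p d m - xv p d (m + 1)) * ∏ j ∈ Ico (m + 2) i, xv p d j
      else 0) = (xv p d (m + 1) - xv p d m) * (1 + Lp p d m) := by
    rw [Finset.sum_range_succ]
    rw [if_pos rfl]
    have : ∀ i ∈ range (m + 1), (if i = m + 1 then (xv p d (m + 1) - xv p d m) * (1 + Lp p d m)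
        else if m + 2 ≤ i then (xv p d m - xv p d (m + 1)) * ∏ j ∈ Ico (m + 2) i, xv p d j
        else 0) = 0 := by
      intro i hi
      have := Finset.mem_range.mp hi
      rw [if_neg (by omega), if_neg (by omega)]
    rw [Finset.sum_congr rfl this]
    simp
  have e2 : ∑ i ∈ Ico (m + 2) r, (if i = m + 1 then (xv p d (m + 1) - xv p d m) * (1 + Lp p d m)
      else if m + 2 ≤ i then (xv p d m - xv p d (m + 1)) * ∏ j ∈ Ico (m + 2) i, xv p d j
      else 0) = (xv p d m - xv p d (m + 1)) * (1 + Rp p r d (m + 2)) := by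
    have : ∀ i ∈ Ico (m + 2) r, (if i = m + 1 then (xv p d (m + 1) - xv p d m) * (1 + Lp p d m)
        else if m + 2 ≤ i then (xv p d m - xv p d (m + 1)) * ∏ j ∈ Ico (m + 2) i, xv p d j
        else 0) = (xv p d m - xv p d (m + 1)) * ∏ j ∈ Ico (m + 2) i, xv p d j := by
      intro i hi
      have := Finset.mem_Ico.mp hi
      rw [if_neg (by omega), if_pos (by omega)]
    rw [Finset.sum_congr rfl this, ← Finset.mul_sum]
    congr 1
    rw [Finset.sum_eq_sum_Ico_succ_bot (show m + 2 < r from hm)]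
    simp [Rp]
  rw [e1, e2]
  ring

/-! ### Competitor and minimality -/

lemma sum_swapd (d : ℕ → ℤ) (m n : ℕ) (hm : m + 1 < n) :
    ∑ j ∈ range n, swapd d m j = ∑ j ∈ range n, d j := by
  refine Finset.sum_equiv (Equiv.swap m (m + 1)) (fun j => ?_) (fun j hj => ?_)
  · constructor <;> intro h <;> simp only [Finset.mem_range] at *
    · rcases eq_or_ne j m with rfl | h1
      · simp [Equiv.swap_apply_left]; omega
      · rcases eq_or_ne j (m + 1) with rfl | h2
        · simp [Equiv.swap_apply_right]; omega
        · rw [Equiv.swap_apply_of_ne_of_ne h1 h2]; exact h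
    · rcases eq_or_ne j m with rfl | h1
      · omega
      · rcases eq_or_ne j (m + 1) with rfl | h2
        · omega
        · rwa [Equiv.swap_apply_of_ne_of_ne h1 h2] at h
  · rcases eq_or_ne j m with rfl | h1
    · simp [swapd, Equiv.swap_apply_left]
    · rcases eq_or_ne j (m + 1) with rfl | h2
      · simp [swapd, Equiv.swap_apply_right, h1.symm]
      · rw [Equiv.swap_apply_of_ne_of_ne h1 h2, swapd_ne d m j h1 h2]

lemma swapd_pos (d : ℕ → ℤ) (m n : ℕ) (hm : m + 1 < n) (hpos : ∀ j < n, 1 ≤ d j) :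
    ∀ j < n, 1 ≤ swapd d m j := by
  intro j hj
  unfold swapd
  split
  · exact hpos (m + 1) hm
  · split
    · exact hpos m (by omega)
    · exact hpos j hj

lemma deltaInv_admissible (s r : ℕ) (hr : 2 ≤ r) (e : ℕ → ℤ)
    (hpos : ∀ j < r - 1, 1 ≤ e j)
    (hsum : ∑ j ∈ range (r - 1), e j = (s : ℤ) - 1) :
    Admissible s r (deltaInv e) := by
  refine ⟨by simp [deltaInv], hsum, fun i hi => ?_⟩
  unfold deltaInv
  rw [Finset.sum_range_succ]
  have := hpos i (by omega)
  omega

lemma swap_nonneg (p s r : ℕ) (hppos : 0 < p) (hr : 2 ≤ r) (d : ℕ → ℤ)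
    (hpos : ∀ j < r - 1, 1 ≤ d j)
    (hsum : ∑ j ∈ range (r - 1), d j = (s : ℤ) - 1)
    (hmin : ∀ b, Admissible s r b → hp p r (deltaInv d) ≤ hp p r b)
    (m : ℕ) (hm : m + 1 < r - 1) :
    0 ≤ (xv p d (m + 1) - xv p d m) * (Lp p d m - Rp p r d (m + 2)) := by
  have hp0 : (p : ℝ) ≠ 0 := by positivity
  have hadm : Admissible s r (deltaInv (swapd d m)) :=
    deltaInv_admissible s r hr (swapd d m) (swapd_pos d m (r - 1) hm hpos)
      (by rw [sum_swapd d m (r - 1) hm]; exact hsum)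
  have h1 := hmin (deltaInv (swapd d m)) hadm
  rw [hp_deltaInv p r hp0 d, hp_deltaInv p r hp0 (swapd d m)] at h1
  rw [GG_swapd p r hppos d m (by omega)] at h1
  linarith

lemma xv_lt_xv (p : ℕ) (hp1 : 1 < p) (d : ℕ → ℤ) (i j : ℕ) (h : d j < d i) :
    xv p d i < xv p d j := by
  apply zpow_lt_zpow_right₀ (by exact_mod_cast hp1)
  omega

lemma noGood10 (p s r : ℕ) (hp1p : 1 < p) (hr : 2 ≤ r) (d : ℕ → ℤ)
    (hpos : ∀ j < r - 1, 1 ≤ d j)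
    (hsum : ∑ j ∈ range (r - 1), d j = (s : ℤ) - 1)
    (hmin : ∀ b, Admissible s r b → hp p r (deltaInv d) ≤ hp p r b)
    (m : ℕ) (hm : m + 1 < r - 1) (hd : d (m + 1) < d m) :
    ¬ (Lp p d m < Rp p r d (m + 2)) := by
  intro hlt
  have h0 := swap_nonneg p s r (by omega) hr d hpos hsum hmin m hm
  have hx : xv p d m < xv p d (m + 1) := xv_lt_xv p hp1p d m (m + 1) hd
  nlinarith

lemma noGood01 (p s r : ℕ) (hp1p : 1 < p) (hr : 2 ≤ r) (d : ℕ → ℤ)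
    (hpos : ∀ j < r - 1, 1 ≤ d j)
    (hsum : ∑ j ∈ range (r - 1), d j = (s : ℤ) - 1)
    (hmin : ∀ b, Admissible s r b → hp p r (deltaInv d) ≤ hp p r b)
    (m : ℕ) (hm : m + 1 < r - 1) (hd : d m < d (m + 1)) :
    ¬ (Rp p r d (m + 2) < Lp p d m) := by
  intro hlt
  have h0 := swap_nonneg p s r (by omega) hr d hpos hsum hmin m hm
  have hx : xv p d (m + 1) < xv p d m := xv_lt_xv p hp1p d (m + 1) m hd
  nlinarith

/-! ### Scan lemmas -/

lemma xv_le_third_mul (p : ℕ) (hp3 : 3 ≤ p) (d : ℕ → ℤ) (i j : ℕ) (h : d j < d i) :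
    xv p d i ≤ 3⁻¹ * xv p d j := by
  have hp1n : (1 : ℕ) ≤ p := by omega
  have hp1 : (1 : ℝ) ≤ (p : ℝ) := by exact_mod_cast hp1n
  have hp0 : (p : ℝ) ≠ 0 := by positivity
  have h1 : xv p d i ≤ (p : ℝ) ^ (-(d j) + (-1 : ℤ)) := by
    apply zpow_le_zpow_right₀ hp1; omega
  rw [zpow_add₀ hp0] at h1
  have h2 : (p : ℝ) ^ (-1 : ℤ) ≤ 3⁻¹ := by
    rw [zpow_neg_one]
    apply inv_anti₀ (by norm_num)
    exact_mod_cast hp3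
  calc xv p d i ≤ (p : ℝ) ^ (-(d j)) * (p : ℝ) ^ (-1 : ℤ) := h1
    _ ≤ (p : ℝ) ^ (-(d j)) * 3⁻¹ := by
        apply mul_le_mul_of_nonneg_left h2 (le_of_lt (zpow_pos (by positivity) _))
    _ = 3⁻¹ * xv p d j := by rw [mul_comm]; rfl

lemma scanL (p r n : ℕ) (hn : n + 1 = r) (hp3 : 3 ≤ p) (d : ℕ → ℤ)
    (hpos : ∀ j < n, 1 ≤ d j) :
    ∀ i j k, j ≤ n →
      (∀ i', i' < i → i' < j ∧ k + i' < n ∧ d (j - 1 - i') = d (k + i')) →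
      ((i = j ∧ k + i < n) ∨ (i < j ∧ k + i < n ∧ d (k + i) < d (j - 1 - i))) →
      Lp p d j < Rp p r d k := by
  have hppos : 0 < p := by omega
  intro i
  induction i with
  | zero =>
    intro j k hj hpre hdec
    rcases hdec with ⟨hj0, hkn⟩ | ⟨hj0, hkn, hd⟩
    · subst hj0
      rw [Lp_zero]
      exact Rp_pos p r hppos d k (by omega)
    · obtain ⟨jj, rfl⟩ : ∃ jj, j = jj + 1 := ⟨j - 1, by omega⟩
      simp only [Nat.add_sub_cancel, Nat.sub_zero, Nat.add_zero] at hd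
      rw [Lp_succ, Rp_succ p r d k (by omega)]
      have b1 : Lp p d jj ≤ 2⁻¹ := Lp_le_half p hp3 d n hpos jj (by omega)
      have b2 : xv p d jj ≤ 3⁻¹ * xv p d k := xv_le_third_mul p hp3 d jj k hd
      have b3 : 0 < xv p d k := xv_pos p hppos d k
      have b4 : 0 < xv p d jj := xv_pos p hppos d jj
      have b5 : 0 ≤ Rp p r d (k + 1) := Rp_nonneg p r hppos d (k + 1)
      nlinarith
  | succ ii ih =>
    intro j k hj hpre hdec
    obtain ⟨hj0, hkn, hd⟩ := hpre 0 (by omega)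
    obtain ⟨jj, rfl⟩ : ∃ jj, j = jj + 1 := ⟨j - 1, by omega⟩
    simp only [Nat.add_sub_cancel, Nat.sub_zero, Nat.add_zero] at hd
    rw [Lp_succ, Rp_succ p r d k (by omega)]
    have hx : xv p d jj = xv p d k := by unfold xv; rw [hd]
    rw [hx]
    have hrec : Lp p d jj < Rp p r d (k + 1) := by
      apply ih jj (k + 1) (by omega)
      · intro i' hi'
        obtain ⟨c1, c2, c3⟩ := hpre (i' + 1) (by omega)
        refine ⟨by omega, by omega, ?_⟩
        have e1 : jj - 1 - i' = jj + 1 - 1 - (i' + 1) := by omega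
        have e2 : k + 1 + i' = k + (i' + 1) := by omega
        rw [e1, e2]; exact c3
      · rcases hdec with ⟨hdj, hdk⟩ | ⟨hdj, hdk, hdd⟩
        · left; exact ⟨by omega, by omega⟩
        · right
          refine ⟨by omega, by omega, ?_⟩
          have e1 : jj - 1 - ii = jj + 1 - 1 - (ii + 1) := by omega
          have e2 : k + 1 + ii = k + (ii + 1) := by omega
          rw [e1, e2]; exact hdd
    have b3 : 0 < xv p d k := xv_pos p hppos d k
    nlinarith

lemma scanR (p r n : ℕ) (hn : n + 1 = r) (hp3 : 3 ≤ p) (d : ℕ → ℤ)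
    (hpos : ∀ j < n, 1 ≤ d j) :
    ∀ i j k, j ≤ n →
      (∀ i', i' < i → i' < j ∧ k + i' < n ∧ d (j - 1 - i') = d (k + i')) →
      ((k + i = n ∧ i < j) ∨ (i < j ∧ k + i < n ∧ d (j - 1 - i) < d (k + i))) →
      Rp p r d k < Lp p d j := by
  have hppos : 0 < p := by omega
  intro i
  induction i with
  | zero =>
    intro j k hj hpre hdec
    rcases hdec with ⟨hk0, hj0⟩ | ⟨hj0, hkn, hd⟩
    · have hk : k = n := by omega
      rw [hk, Rp_eq_zero p r d n (by omega)]
      obtain ⟨jj, rfl⟩ : ∃ jj, j = jj + 1 := ⟨j - 1, by omega⟩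
      exact Lp_pos p hppos d jj
    · obtain ⟨jj, rfl⟩ : ∃ jj, j = jj + 1 := ⟨j - 1, by omega⟩
      simp only [Nat.add_sub_cancel, Nat.sub_zero, Nat.add_zero] at hd
      rw [Lp_succ, Rp_succ p r d k (by omega)]
      have b1 : Rp p r d (k + 1) ≤ 2⁻¹ := Rp_le_half p r hp3 d n hn hpos (k + 1)
      have b2 : xv p d k ≤ 3⁻¹ * xv p d jj := xv_le_third_mul p hp3 d k jj hd
      have b3 : 0 < xv p d k := xv_pos p hppos d k
      have b4 : 0 < xv p d jj := xv_pos p hppos d jj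
      have b5 : 0 ≤ Lp p d jj := Lp_nonneg p hppos d jj
      nlinarith
  | succ ii ih =>
    intro j k hj hpre hdec
    obtain ⟨hj0, hkn, hd⟩ := hpre 0 (by omega)
    obtain ⟨jj, rfl⟩ : ∃ jj, j = jj + 1 := ⟨j - 1, by omega⟩
    simp only [Nat.add_sub_cancel, Nat.sub_zero, Nat.add_zero] at hd
    rw [Lp_succ, Rp_succ p r d k (by omega)]
    have hx : xv p d jj = xv p d k := by unfold xv; rw [hd]
    rw [hx]
    have hrec : Rp p r d (k + 1) < Lp p d jj := by
      apply ih jj (k + 1) (by omega)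
      · intro i' hi'
        obtain ⟨c1, c2, c3⟩ := hpre (i' + 1) (by omega)
        refine ⟨by omega, by omega, ?_⟩
        have e1 : jj - 1 - i' = jj + 1 - 1 - (i' + 1) := by omega
        have e2 : k + 1 + i' = k + (i' + 1) := by omega
        rw [e1, e2]; exact c3
      · rcases hdec with ⟨hdk, hdj⟩ | ⟨hdj, hdk, hdd⟩
        · left; exact ⟨by omega, by omega⟩
        · right
          refine ⟨by omega, by omega, ?_⟩
          have e1 : jj - 1 - ii = jj + 1 - 1 - (ii + 1) := by omega
          have e2 : k + 1 + ii = k + (ii + 1) := by omega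
          rw [e1, e2]; exact hdd
    have b3 : 0 < xv p d k := xv_pos p hppos d k
    nlinarith

/-! ### The key combinatorial lemma -/

lemma keyA (p s r n : ℕ) (hn : n + 1 = r) (hp3 : 3 ≤ p) (fq : ℤ) (hfq : 1 ≤ fq)
    (d : ℕ → ℤ)
    (hmem : ∀ j < n, d j = fq ∨ d j = fq + 1)
    (hsum : ∑ j ∈ range n, d j = (s : ℤ) - 1)
    (hmin : ∀ b, Admissible s r b → hp p r (deltaInv d) ≤ hp p r b)
    (z y : ℕ) (hzy : z + 1 < y) (hyn : y + 1 < n)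
    (hz : d z = fq + 1) (hz1 : d (z + 1) = fq + 1)
    (hy : d y = fq) (hy1 : d (y + 1) = fq) : False := by
  classical
  have hpos : ∀ j < n, 1 ≤ d j := by
    intro j hj; rcases hmem j hj with h | h <;> omega
  have hr2 : 2 ≤ r := by omega
  have hrn : r - 1 = n := by omega
  -- innermost 00 (with some 11 before)
  set P : ℕ → Prop := fun y' => y' + 1 < n ∧ d y' = fq ∧ d (y' + 1) = fq ∧
    ∃ z', z' + 1 < y' ∧ d z' = fq + 1 ∧ d (z' + 1) = fq + 1 with hPdef
  have hex : ∃ y', P y' := ⟨y, hyn, hy, hy1, z, hzy, hz, hz1⟩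
  obtain ⟨y₀, hPy₀, hy₀min⟩ :
      ∃ y₀, P y₀ ∧ ∀ y' < y₀, ¬ P y' := by
    letI : DecidablePred P := Classical.decPred P
    exact ⟨Nat.find hex, Nat.find_spec hex, fun y' h => Nat.find_min hex h⟩
  obtain ⟨hy₀n, hy₀, hy₀1, z₁, hz₁y, hz₁a, hz₁b⟩ := hPy₀
  -- outermost 11 before y₀
  set Q : ℕ → Prop := fun z' => z' + 1 < y₀ ∧ d z' = fq + 1 ∧ d (z' + 1) = fq + 1 with hQdef
  obtain ⟨z₀, hQz₀, hz₀max⟩ :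
      ∃ z₀, Q z₀ ∧ ∀ z', z₀ < z' → z' ≤ y₀ → ¬ Q z' := by
    letI : DecidablePred Q := Classical.decPred Q
    refine ⟨Nat.findGreatest Q y₀, ?_, fun z' h1 h2 => Nat.findGreatest_is_greatest h1 h2⟩
    exact Nat.findGreatest_spec (le_of_lt (by omega : z₁ < y₀)) ⟨hz₁y, hz₁a, hz₁b⟩
  obtain ⟨hz₀y, hz₀, hz₀1⟩ := hQz₀
  obtain ⟨w, hw⟩ : ∃ w, y₀ = z₀ + 2 + w := ⟨y₀ - z₀ - 2, by omega⟩
  -- no 11 / no 00 strictly inside the gap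
  have no11 : ∀ u, z₀ < u → u + 1 < y₀ → ¬ (d u = fq + 1 ∧ d (u + 1) = fq + 1) := by
    intro u h1 h2 hu
    exact hz₀max u h1 (by omega) ⟨h2, hu.1, hu.2⟩
  have no00 : ∀ u, z₀ + 1 < u → u < y₀ → ¬ (d u = fq ∧ d (u + 1) = fq) := by
    intro u h1 h2 hu
    exact hy₀min u h2 ⟨by omega, hu.1, hu.2, z₀, by omega, hz₀, hz₀1⟩
  -- values in the gap
  have gapVal : ∀ i, i < w → d (z₀ + 2 + i) = (if i % 2 = 0 then fq else fq + 1) := by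
    intro i
    induction i with
    | zero =>
      intro h0
      rw [if_pos (by omega)]
      have hno := no11 (z₀ + 1) (by omega) (by omega)
      rcases hmem (z₀ + 2) (by omega) with h | h
      · exact h
      · exact absurd ⟨hz₀1, by rw [show z₀ + 1 + 1 = z₀ + 2 by omega]; exact h⟩ hno
    | succ i ih =>
      intro hi1
      have hprev := ih (by omega)
      rcases Nat.even_or_odd i with he | ho
      · have hie : i % 2 = 0 := Nat.even_iff.mp he
        rw [if_pos hie] at hprev
        rw [if_neg (by omega : ¬ (i + 1) % 2 = 0)]
        have hno := no00 (z₀ + 2 + i) (by omega) (by omega)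
        rcases hmem (z₀ + 2 + (i + 1)) (by omega) with h | h
        · exact absurd ⟨hprev, by rw [show z₀ + 2 + i + 1 = z₀ + 2 + (i + 1) by omega]; exact h⟩ hno
        · exact h
      · have hio : i % 2 = 1 := Nat.odd_iff.mp ho
        rw [if_neg (by omega : ¬ i % 2 = 0)] at hprev
        rw [if_pos (by omega : (i + 1) % 2 = 0)]
        have hno := no11 (z₀ + 2 + i) (by omega) (by omega)
        rcases hmem (z₀ + 2 + (i + 1)) (by omega) with h | h
        · exact h
        · exact absurd ⟨hprev, by rw [show z₀ + 2 + i + 1 = z₀ + 2 + (i + 1) by omega]; exact h⟩ hno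
  have weven : w % 2 = 0 := by
    by_contra hodd
    have hw1 : 1 ≤ w := by omega
    have hv := gapVal (w - 1) (by omega)
    rw [if_pos (by omega : (w - 1) % 2 = 0)] at hv
    exact no00 (z₀ + 2 + (w - 1)) (by omega) (by omega)
      ⟨hv, by rw [show z₀ + 2 + (w - 1) + 1 = y₀ by omega]; exact hy₀⟩
  -- expected pattern at distance i from the block (big iff i even)
  have rightVal : ∀ i, i < w → d (z₀ + 3 + i) = (if i % 2 = 0 then fq + 1 else fq) := by
    intro i hi
    rcases Nat.lt_or_ge (i + 1) w with h | h
    · have hg := gapVal (i + 1) h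
      rw [show z₀ + 2 + (i + 1) = z₀ + 3 + i by omega] at hg
      rcases Nat.even_or_odd i with he | ho
      · have hie : i % 2 = 0 := Nat.even_iff.mp he
        rw [hg, if_pos hie, if_neg (by omega : ¬ (i + 1) % 2 = 0)]
      · have hio : i % 2 = 1 := Nat.odd_iff.mp ho
        rw [hg, if_neg (by omega : ¬ i % 2 = 0), if_pos (by omega : (i + 1) % 2 = 0)]
    · have hiw : i + 1 = w := by omega
      have hio : ¬ i % 2 = 0 := by omega
      rw [show z₀ + 3 + i = y₀ by omega, hy₀, if_neg hio]
  have hgapR : ∀ i, i ≤ w → d (z₀ + 1 + i) = (if i % 2 = 0 then fq + 1 else fq) := by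
    intro i hi
    rcases Nat.eq_zero_or_pos i with rfl | h
    · rw [if_pos (by omega : 0 % 2 = 0), show z₀ + 1 + 0 = z₀ + 1 by omega]
      exact hz₀1
    · have hg := gapVal (i - 1) (by omega)
      rw [show z₀ + 2 + (i - 1) = z₀ + 1 + i by omega] at hg
      rcases Nat.even_or_odd i with he | ho
      · have hie : i % 2 = 0 := Nat.even_iff.mp he
        rw [hg, if_pos hie, if_neg (by omega : ¬ (i - 1) % 2 = 0)]
      · have hio : i % 2 = 1 := Nat.odd_iff.mp ho
        rw [hg, if_neg (by omega : ¬ i % 2 = 0), if_pos (by omega : (i - 1) % 2 = 0)]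
  -- first deviation going left from z₀
  set R : ℕ → Prop := fun i => z₀ < i ∨ d (z₀ - i) ≠ (if i % 2 = 0 then fq + 1 else fq)
    with hRdef
  have hexR : ∃ i, R i := ⟨z₀ + 1, Or.inl (by omega)⟩
  obtain ⟨lam, hlam, hlampre'⟩ : ∃ lam, R lam ∧ ∀ i < lam, ¬ R i := by
    letI : DecidablePred R := Classical.decPred R
    exact ⟨Nat.find hexR, Nat.find_spec hexR, fun i h => Nat.find_min hexR h⟩
  have hlampre : ∀ i, i < lam → i ≤ z₀ ∧ d (z₀ - i) = (if i % 2 = 0 then fq + 1 else fq) := by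
    intro i hi
    have hni := hlampre' i hi
    simp only [hRdef] at hni
    push_neg at hni
    exact ⟨by omega, hni.2⟩
  have hlam1 : 1 ≤ lam := by
    rcases Nat.eq_zero_or_pos lam with h0 | h; swap; · exact h
    exfalso
    rw [h0] at hlam; simp only [hRdef] at hlam
    rcases hlam with h | h
    · omega
    · apply h
      rw [Nat.sub_zero, hz₀]
      simp
  have hlamz : lam ≤ z₀ + 1 := by
    by_contra hc
    exact hlampre' (z₀ + 1) (by omega) (Or.inl (by omega))
  -- the first small entry after the block
  have hsm : d (z₀ + 2) = fq := by
    rcases Nat.eq_zero_or_pos w with rfl | h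
    · rw [show z₀ + 2 = y₀ by omega]; exact hy₀
    · have hg := gapVal 0 h
      rwa [if_pos (by omega : 0 % 2 = 0), Nat.add_zero] at hg
  by_cases hcase : lam ≤ w ∧ lam ≤ z₀ ∧ lam % 2 = 0
  · -- boundary (z₀ - 1, z₀), type (0,1)
    obtain ⟨hlw, hlz, hle⟩ := hcase
    have hlam2 : 2 ≤ lam := by omega
    have hdev : d (z₀ - lam) = fq := by
      simp only [hRdef] at hlam
      rcases hlam with h | h
      · omega
      · rcases hmem (z₀ - lam) (by omega) with h' | h'
        · exact h'
        · exfalso; apply h; rw [h', if_pos hle]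
    have hscan : Rp p r d (z₀ + 1) < Lp p d (z₀ - 1) := by
      apply scanR p r n hn hp3 d hpos (lam - 2) (z₀ - 1) (z₀ + 1) (by omega)
      · intro i' hi'
        obtain ⟨hi'z, hi'v⟩ := hlampre (i' + 2) (by omega)
        refine ⟨by omega, by omega, ?_⟩
        have e1 : z₀ - 1 - 1 - i' = z₀ - (i' + 2) := by omega
        rw [e1, hi'v, hgapR i' (by omega)]
        rcases Nat.even_or_odd i' with he | ho
        · have h2 : i' % 2 = 0 := Nat.even_iff.mp he
          rw [if_pos (by omega : (i' + 2) % 2 = 0), if_pos h2]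
        · have h2 : i' % 2 = 1 := Nat.odd_iff.mp ho
          rw [if_neg (by omega : ¬ (i' + 2) % 2 = 0), if_neg (by omega : ¬ i' % 2 = 0)]
      · right
        refine ⟨by omega, by omega, ?_⟩
        have e1 : z₀ - 1 - 1 - (lam - 2) = z₀ - lam := by omega
        rw [e1, hdev, hgapR (lam - 2) (by omega), if_pos (by omega : (lam - 2) % 2 = 0)]
        omega
    have hng := noGood01 p s r (by omega) hr2 d (by rwa [hrn]) (by rwa [hrn]) hmin
      (z₀ - 1) (by omega) (by
        have h1v := (hlampre 1 (by omega)).2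
        rw [if_neg (by omega : ¬ 1 % 2 = 0)] at h1v
        rw [show z₀ - 1 + 1 = z₀ by omega, h1v, hz₀]
        omega)
    rw [show z₀ - 1 + 2 = z₀ + 1 by omega] at hng
    exact hng hscan
  · -- boundary (z₀ + 1, z₀ + 2), type (1,0)
    have hscan : Lp p d (z₀ + 1) < Rp p r d (z₀ + 3) := by
      by_cases h1 : lam ≤ w
      · rcases Nat.lt_or_ge z₀ lam with h2 | h2
        · -- lam = z₀ + 1 ≤ w : the left end of the word is reached
          have hlz : lam = z₀ + 1 := by omega
          apply scanL p r n hn hp3 d hpos (z₀ + 1) (z₀ + 1) (z₀ + 3) (by omega)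
          · intro i' hi'
            obtain ⟨hi'z, hi'v⟩ := hlampre i' (by omega)
            refine ⟨by omega, by omega, ?_⟩
            have e1 : z₀ + 1 - 1 - i' = z₀ - i' := by omega
            rw [e1, hi'v, rightVal i' (by omega)]
          · left; exact ⟨rfl, by omega⟩
        · -- lam ≤ z₀ and lam is odd (the even case was handled above)
          have hlo : lam % 2 = 1 := by
            rcases Nat.even_or_odd lam with he | ho
            · exact absurd ⟨h1, h2, Nat.even_iff.mp he⟩ hcase
            · exact Nat.odd_iff.mp ho
          have hlamw : lam < w := by omega
          have hdev : d (z₀ - lam) = fq + 1 := by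
            simp only [hRdef] at hlam
            rcases hlam with h | h
            · omega
            · rcases hmem (z₀ - lam) (by omega) with h' | h'
              · exfalso; apply h; rw [h', if_neg (by omega : ¬ lam % 2 = 0)]
              · exact h'
          apply scanL p r n hn hp3 d hpos lam (z₀ + 1) (z₀ + 3) (by omega)
          · intro i' hi'
            obtain ⟨hi'z, hi'v⟩ := hlampre i' (by omega)
            refine ⟨by omega, by omega, ?_⟩
            have e1 : z₀ + 1 - 1 - i' = z₀ - i' := by omega
            rw [e1, hi'v, rightVal i' (by omega)]
          · right
            refine ⟨by omega, by omega, ?_⟩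
            have e1 : z₀ + 1 - 1 - lam = z₀ - lam := by omega
            rw [e1, hdev, rightVal lam hlamw, if_neg (by omega : ¬ lam % 2 = 0)]
            omega
      · -- lam > w : the deviation on the right (at y₀ + 1) decides
        obtain ⟨hwz, hwv⟩ := hlampre w (by omega)
        apply scanL p r n hn hp3 d hpos w (z₀ + 1) (z₀ + 3) (by omega)
        · intro i' hi'
          obtain ⟨hi'z, hi'v⟩ := hlampre i' (by omega)
          refine ⟨by omega, by omega, ?_⟩
          have e1 : z₀ + 1 - 1 - i' = z₀ - i' := by omega
          rw [e1, hi'v, rightVal i' (by omega)]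
        · right
          refine ⟨by omega, by omega, ?_⟩
          have e1 : z₀ + 1 - 1 - w = z₀ - w := by omega
          rw [e1, hwv, show z₀ + 3 + w = y₀ + 1 by omega, hy₀1, if_pos weven]
          omega
    have hng := noGood10 p s r (by omega) hr2 d (by rwa [hrn]) (by rwa [hrn]) hmin
      (z₀ + 1) (by omega) (by rw [show z₀ + 1 + 1 = z₀ + 2 by omega, hsm, hz₀1]; omega)
    rw [show z₀ + 1 + 2 = z₀ + 3 by omega] at hng
    exact hng hscan

/-! ### Reversal symmetry -/

lemma GG_pairs (p r : ℕ) (e : ℕ → ℤ) :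
    GG p r e = ∑ q ∈ (range r ×ˢ range r).filter (fun q => q.1 < q.2),
      ∏ j ∈ Ico q.1 q.2, xv p e j := by
  unfold GG Lp
  rw [Finset.sum_filter, Finset.sum_product]
  conv_rhs => rw [Finset.sum_comm]
  refine Finset.sum_congr rfl fun i hi => ?_
  have hir : i < r := Finset.mem_range.mp hi
  rw [← Finset.sum_filter]
  congr 1
  ext k
  simp only [Finset.mem_filter, Finset.mem_range]
  omega

lemma GG_revd (p r n : ℕ) (hn : n + 1 = r) (d : ℕ → ℤ) :
    GG p r (fun j => d (n - 1 - j)) = GG p r d := by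
  rw [GG_pairs, GG_pairs]
  refine Finset.sum_nbij' (i := fun q => (n - q.2, n - q.1)) (j := fun q => (n - q.2, n - q.1))
    ?_ ?_ ?_ ?_ ?_
  · intro q hq
    simp only [Finset.mem_filter, Finset.mem_product, Finset.mem_range] at hq
    simp only [Finset.mem_filter, Finset.mem_product, Finset.mem_range]
    omega
  · intro q hq
    simp only [Finset.mem_filter, Finset.mem_product, Finset.mem_range] at hq
    simp only [Finset.mem_filter, Finset.mem_product, Finset.mem_range]
    omega
  · intro q hq
    simp only [Finset.mem_filter, Finset.mem_product, Finset.mem_range] at hq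
    have e1 : n - (n - q.1) = q.1 := by omega
    have e2 : n - (n - q.2) = q.2 := by omega
    simp only []
    rw [e1, e2]
  · intro q hq
    simp only [Finset.mem_filter, Finset.mem_product, Finset.mem_range] at hq
    have e1 : n - (n - q.1) = q.1 := by omega
    have e2 : n - (n - q.2) = q.2 := by omega
    simp only []
    rw [e1, e2]
  · intro q hq
    simp only [Finset.mem_filter, Finset.mem_product, Finset.mem_range] at hq
    have h1 : ∀ j, xv p (fun j' => d (n - 1 - j')) j = xv p d (n - 1 - j) := fun j => rfl
    calc ∏ j ∈ Ico q.1 q.2, xv p (fun j' => d (n - 1 - j')) j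
        = ∏ j ∈ Ico q.1 q.2, xv p d (n - 1 - j) := Finset.prod_congr rfl fun j _ => h1 j
      _ = ∏ j ∈ Ico (n - 1 + 1 - q.2) (n - 1 + 1 - q.1), xv p d j := by
          apply Finset.prod_Ico_reflect
          omega
      _ = ∏ j ∈ Ico (n - q.2) (n - q.1), xv p d j := by
          rw [show n - 1 + 1 - q.2 = n - q.2 by omega, show n - 1 + 1 - q.1 = n - q.1 by omega]

lemma keyB (p s r n : ℕ) (hn : n + 1 = r) (hp3 : 3 ≤ p) (fq : ℤ) (hfq : 1 ≤ fq)
    (d : ℕ → ℤ)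
    (hmem : ∀ j < n, d j = fq ∨ d j = fq + 1)
    (hsum : ∑ j ∈ range n, d j = (s : ℤ) - 1)
    (hmin : ∀ b, Admissible s r b → hp p r (deltaInv d) ≤ hp p r b)
    (u z : ℕ) (huz : u + 1 < z) (hzn : z + 1 < n)
    (hu : d u = fq) (hu1 : d (u + 1) = fq)
    (hz : d z = fq + 1) (hz1 : d (z + 1) = fq + 1) : False := by
  have hp0 : (p : ℝ) ≠ 0 := by positivity
  set e : ℕ → ℤ := fun j => d (n - 1 - j) with hedef
  have hpeq : hp p r (deltaInv e) = hp p r (deltaInv d) := by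
    rw [hp_deltaInv p r hp0 e, hp_deltaInv p r hp0 d, hedef]
    exact GG_revd p r n hn d
  apply keyA p s r n hn hp3 fq hfq e
    (fun j hj => by
      have : n - 1 - j < n := by omega
      exact hmem _ this)
    (by rw [hedef]; rw [Finset.sum_range_reflect d n]; exact hsum)
    (fun b hb => by rw [hpeq]; exact hmin b hb)
    (n - 2 - z) (n - 2 - u) (by omega) (by omega)
  · show d (n - 1 - (n - 2 - z)) = fq + 1
    rw [show n - 1 - (n - 2 - z) = z + 1 by omega]; exact hz1
  · show d (n - 1 - (n - 2 - z + 1)) = fq + 1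
    rw [show n - 1 - (n - 2 - z + 1) = z by omega]; exact hz
  · show d (n - 1 - (n - 2 - u)) = fq
    rw [show n - 1 - (n - 2 - u) = u + 1 by omega]; exact hu1
  · show d (n - 1 - (n - 2 - u + 1)) = fq
    rw [show n - 1 - (n - 2 - u + 1) = u by omega]; exact hu

/-! ### Counting -/

lemma card_big (s n : ℕ) (hs : n ≤ s - 1) (hn1 : 1 ≤ n) (hs1 : 1 ≤ s) (fq : ℤ)
    (hfq : fq = ((((s : ℕ) - 1) / n : ℕ) : ℤ)) (d : ℕ → ℤ)
    (hmem : ∀ j < n, d j = fq ∨ d j = fq + 1)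
    (hsum : ∑ j ∈ range n, d j = (s : ℤ) - 1) :
    (((range n).filter (fun j => d j = fq + 1)).card : ℤ) = (((s - 1) % n : ℕ) : ℤ) := by
  have key : ∀ j ∈ range n, d j = fq + (if d j = fq + 1 then (1 : ℤ) else 0) := by
    intro j hj
    rcases hmem j (Finset.mem_range.mp hj) with h | h
    · rw [if_neg (by omega), h, add_zero]
    · rw [if_pos h, h]
  rw [Finset.sum_congr rfl key, Finset.sum_add_distrib, Finset.sum_const, Finset.sum_boole] at hsum
  have hcast : ((s : ℤ) - 1) = (((s - 1 : ℕ) : ℤ)) := by omega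
  have hdm : (s - 1 : ℕ) = n * ((s - 1) / n) + (s - 1) % n := (Nat.div_add_mod _ _).symm
  have : (((s - 1 : ℕ) : ℤ)) = n * fq + (((s - 1) % n : ℕ) : ℤ) := by
    rw [hfq]
    exact_mod_cast congrArg (fun t : ℕ => (t : ℤ)) hdm
  simp only [nsmul_eq_mul, Finset.card_range] at hsum
  omega

lemma no11 (p s r : ℕ) (hp3 : 3 ≤ p) (hr : 3 ≤ r) (hrs : r < s)
    (g : ℕ) (hgdef : g = (s - 1) % (r - 1)) (hg : 2 * g ≤ r - 2)
    (fq : ℤ) (hfq : fq = (((s - 1) / (r - 1) : ℕ) : ℤ))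
    (d : ℕ → ℤ)
    (hmem : ∀ j < r - 1, d j = fq ∨ d j = fq + 1)
    (hsum : ∑ j ∈ Finset.range (r - 1), d j = (s : ℤ) - 1)
    (hframe : d 0 = fq ∧ d (r - 2) = fq)
    (hmin : ∀ b : ℕ → ℤ, Admissible s r b → hp p r (deltaInv d) ≤ hp p r b) :
    ∀ z, z + 1 < r - 1 → ¬ (d z = fq + 1 ∧ d (z + 1) = fq + 1) := by
  classical
  set n := r - 1 with hndef
  have hn : n + 1 = r := by omega
  have hfq1 : 1 ≤ fq := by
    rw [hfq]
    have : 1 ≤ (s - 1) / (r - 1) := (Nat.one_le_div_iff (by omega)).mpr (by omega)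
    exact_mod_cast this
  intro z hz1n hzz
  obtain ⟨hbz, hbz1⟩ := hzz
  -- count of big entries is g
  have hcard : (((range n).filter (fun j => d j = fq + 1)).card : ℤ) = (g : ℤ) := by
    rw [hgdef]
    have := card_big s n (by omega) (by omega) (by omega) fq (by rw [hfq]) d hmem hsum
    rw [this]
  have hcardT : ((range n).filter (fun j => d j = fq + 1)).card = g := by exact_mod_cast hcard
  -- there must be two adjacent small entries somewhere
  have h00 : ∃ u, u + 1 < n ∧ d u = fq ∧ d (u + 1) = fq := by
    by_contra hno
    push_neg at hno
    set T := (range n).filter (fun j => d j = fq + 1) with hTdef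
    set S := (range n).filter (fun j => d j = fq) with hSdef
    have hST : S.card + T.card = n := by
      have h1 : ((range n).filter (fun j => d j = fq)).card
          + ((range n).filter (fun j => ¬ d j = fq)).card = (range n).card :=
        Finset.card_filter_add_card_filter_not (p := fun j => d j = fq)
      have h2 : (range n).filter (fun j => ¬ d j = fq)
          = (range n).filter (fun j => d j = fq + 1) := by
        apply Finset.filter_congr
        intro j hj
        have := hmem j (Finset.mem_range.mp hj)
        constructor
        · intro h; rcases this with h' | h'
          · exact absurd h' h
          · exact h'
        · intro h; omega
      rw [h2, Finset.card_range] at h1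
      exact h1
    have hSn : (r - 2) ∈ S := by
      rw [hSdef]
      refine Finset.mem_filter.mpr ⟨Finset.mem_range.mpr (by omega), hframe.2⟩
    set S' := S.erase (r - 2) with hS'def
    have hS'card : S'.card = S.card - 1 := by
      rw [hS'def, Finset.card_erase_of_mem hSn]
    have himg : S'.image (· + 1) ⊆ T := by
      intro t ht
      obtain ⟨j, hjS', rfl⟩ := Finset.mem_image.mp ht
      have hjS := Finset.mem_erase.mp hjS'
      have hjr : j ∈ range n := Finset.mem_filter.mp hjS.2 |>.1
      have hjn : j < n := Finset.mem_range.mp hjr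
      have hjv : d j = fq := (Finset.mem_filter.mp hjS.2).2
      have hj1n : j + 1 < n := by
        have := hjS.1
        omega
      have : d (j + 1) = fq + 1 := by
        rcases hmem (j + 1) hj1n with h | h
        · exact absurd h (hno j hj1n hjv)
        · exact h
      rw [hTdef]
      exact Finset.mem_filter.mpr ⟨Finset.mem_range.mpr hj1n, this⟩
    have himgcard : (S'.image (· + 1)).card = S'.card :=
      Finset.card_image_of_injective _ (add_left_injective 1)
    have hineq : S'.card ≤ T.card := by
      rw [← himgcard]
      exact Finset.card_le_card himg
    have hScard : S.card = n - g := by omega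
    have hn2g : 2 * g + 1 ≤ n := by omega
    -- forces equality, so the image is all of T
    have hEq : S'.image (· + 1) = T := by
      apply Finset.eq_of_subset_of_card_le himg
      omega
    have hzT : z + 1 ∈ T := by
      rw [hTdef]
      exact Finset.mem_filter.mpr ⟨Finset.mem_range.mpr (by omega), hbz1⟩
    rw [← hEq] at hzT
    obtain ⟨j, hjS', hj⟩ := Finset.mem_image.mp hzT
    have : j = z := by omega
    subst this
    have : d j = fq := (Finset.mem_filter.mp (Finset.mem_erase.mp hjS').2).2
    omega
  obtain ⟨u, hun, hu, hu1⟩ := h00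
  have hne1 : u ≠ z := by intro h; rw [h] at hu; omega
  have hne2 : u ≠ z + 1 := by intro h; rw [h] at hu; omega
  have hne3 : u + 1 ≠ z := by intro h; rw [h] at hu1; omega
  rcases Nat.lt_or_ge u z with h | h
  · -- u + 1 < z : 00 before 11
    exact keyB p s r n hn hp3 fq hfq1 d hmem hsum hmin u z (by omega) (by omega) hu hu1 hbz hbz1
  · -- z + 1 < u : 11 before 00
    exact keyA p s r n hn hp3 fq hfq1 d hmem hsum hmin z u (by omega) (by omega) hbz hbz1 hu hu1

/-! ### Maximal runs -/

lemma exists_maxrun (n : ℕ) (d : ℕ → ℤ) (v : ℤ) (st : ℕ) (hst : st < n) (hv : d st = v)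
    (hleft : 0 < st → d (st - 1) ≠ v) : ∃ l, IsMaxRun n d v st l := by
  classical
  set Qr : ℕ → Prop := fun u => ¬ (st + u < n ∧ d (st + u) = v) with hQdef
  have hex : ∃ u, Qr u := ⟨n, by simp only [hQdef]; push_neg; intro h; omega⟩
  letI : DecidablePred Qr := Classical.decPred Qr
  obtain ⟨l, hQl, hlmin⟩ : ∃ l, Qr l ∧ ∀ k < l, ¬ Qr k :=
    ⟨Nat.find hex, Nat.find_spec hex, fun k h => Nat.find_min hex h⟩
  have hl0 : 0 < l := by
    rcases Nat.eq_zero_or_pos l with rfl | h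
    · exfalso
      apply hQl
      constructor
      · omega
      · rw [Nat.add_zero]; exact hv
    · exact h
  have hmem : ∀ k < l, st + k < n ∧ d (st + k) = v := by
    intro k hk
    have h := hlmin k hk
    simp only [hQdef, not_not] at h
    exact h
  refine ⟨l, hl0, ?_, fun k hk => (hmem k hk).2, hleft, ?_⟩
  · by_contra hc
    push_neg at hc
    have h1 := hmem (l - 1) (by omega)
    omega
  · intro hln
    simp only [hQdef] at hQl
    push_neg at hQl
    exact hQl hln

/-- Proposition 5.1(ii) (partly): if `(r-1) ∤ (s-1)`, `g ≡ s-1 mod (r-1)` is the least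
positive residue, `d ∈ Biv*(s,r)` (entries in `{[q], [q]+1}`, summing to `s-1`, first and
last entries `[q]`) with `h_p(δ⁻¹(d)) = min h_p`, and `2g ≤ r-2`, then `θ_max(d) = 1`:
every maximal `[q]+1`-block of `d` is a singleton; hence `d` has exactly `g` entries
`[q]+1`, no two adjacent, exactly `r-g-1` entries `[q]`, and exactly `g+1` maximal
`[q]`-blocks (whose average length is therefore `q₁ = (r-g-1)/(g+1)`). -/
theorem stmt12 (p s r : ℕ) (hpp : p.Prime) (hp3 : 3 ≤ p) (hr : 3 ≤ r) (hrs : r < s)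
    (hndvd1 : ¬ (r - 1) ∣ (s - 1))
    (g : ℕ) (hgdef : g = (s - 1) % (r - 1)) (hg : 2 * g ≤ r - 2)
    (fq : ℤ) (hfq : fq = (((s - 1) / (r - 1) : ℕ) : ℤ))
    (d : ℕ → ℤ)
    (hmem : ∀ j < r - 1, d j = fq ∨ d j = fq + 1)
    (hsum : ∑ j ∈ Finset.range (r - 1), d j = (s : ℤ) - 1)
    (hframe : d 0 = fq ∧ d (r - 2) = fq)
    (hmin : ∀ b : ℕ → ℤ, Admissible s r b → hp p r (deltaInv d) ≤ hp p r b) :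
    (∀ i l, IsMaxRun (r - 1) d (fq + 1) i l → l = 1) ∧
    ((Finset.range (r - 1)).filter (fun j => d j = fq + 1)).card = g ∧
    (∀ j, j + 1 < r - 1 → ¬ (d j = fq + 1 ∧ d (j + 1) = fq + 1)) ∧
    ((Finset.range (r - 1)).filter (fun j => d j = fq)).card = r - 1 - g ∧
    {i | ∃ l, IsMaxRun (r - 1) d fq i l}.ncard = g + 1 := by
  classical
  set n := r - 1 with hndef
  have hn1 : n + 1 = r := by omega
  -- conclusion (3) : no two adjacent big entries
  have h3 : ∀ j, j + 1 < r - 1 → ¬ (d j = fq + 1 ∧ d (j + 1) = fq + 1) :=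
    no11 p s r hp3 hr hrs g hgdef hg fq hfq d hmem hsum hframe hmin
  -- conclusion (2)
  have hcast := card_big s n (by omega) (by omega) (by omega) fq (by rw [hfq]) d hmem hsum
  have h2 : ((range n).filter (fun j => d j = fq + 1)).card = g := by
    have : (((range n).filter (fun j => d j = fq + 1)).card : ℤ) = ((g : ℕ) : ℤ) := by
      rw [hcast, hgdef]
    exact_mod_cast this
  -- conclusion (4)
  have hST : ((range n).filter (fun j => d j = fq)).card
      + ((range n).filter (fun j => d j = fq + 1)).card = n := by
    have h1 : ((range n).filter (fun j => d j = fq)).card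
        + ((range n).filter (fun j => ¬ d j = fq)).card = (range n).card :=
      Finset.card_filter_add_card_filter_not (p := fun j => d j = fq)
    have hflt : (range n).filter (fun j => ¬ d j = fq)
        = (range n).filter (fun j => d j = fq + 1) := by
      apply Finset.filter_congr
      intro j hj
      have := hmem j (Finset.mem_range.mp hj)
      constructor
      · intro h; rcases this with h' | h'
        · exact absurd h' h
        · exact h'
      · intro h; omega
    rw [hflt, Finset.card_range] at h1
    exact h1
  have h4 : ((range n).filter (fun j => d j = fq)).card = n - g := by omega
  -- conclusion (1)
  have h1c : ∀ i l, IsMaxRun (r - 1) d (fq + 1) i l → l = 1 := by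
    intro i l hrun
    obtain ⟨hl0, hiln, hval, _, _⟩ := hrun
    by_contra hne
    have hl2 : 2 ≤ l := by omega
    have hv0 : d i = fq + 1 := by have := hval 0 (by omega); rwa [Nat.add_zero] at this
    have hv1 : d (i + 1) = fq + 1 := hval 1 (by omega)
    exact h3 i (by omega) ⟨hv0, hv1⟩
  -- conclusion (5)
  have h5 : {i | ∃ l, IsMaxRun (r - 1) d fq i l}.ncard = g + 1 := by
    set T := (range n).filter (fun j => d j = fq + 1) with hTdef
    have hset : {i | ∃ l, IsMaxRun (r - 1) d fq i l} = ↑(insert 0 (T.image (· + 1))) := by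
      ext i
      simp only [Set.mem_setOf_eq, Finset.coe_insert, Set.mem_insert_iff, Finset.coe_image,
        Set.mem_image, Finset.mem_coe]
      constructor
      · rintro ⟨l, hl0, hiln, hval, hleft, _⟩
        rcases Nat.eq_zero_or_pos i with rfl | hipos
        · exact Or.inl rfl
        · right
          refine ⟨i - 1, ?_, by omega⟩
          have hi1n : i - 1 < n := by omega
          have hne : d (i - 1) ≠ fq := hleft hipos
          have hbig : d (i - 1) = fq + 1 := by
            rcases hmem (i - 1) hi1n with h | h
            · exact absurd h hne
            · exact h
          rw [hTdef]
          exact Finset.mem_filter.mpr ⟨Finset.mem_range.mpr hi1n, hbig⟩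
      · intro hi
        rcases hi with rfl | ⟨j, hjT, rfl⟩
        · have h00 : d 0 = fq := hframe.1
          have hval0 : ∀ k < r - 1, True := fun _ _ => trivial
          have := exists_maxrun n d fq 0 (by omega) h00 (by omega)
          rw [show (r : ℕ) - 1 = n from rfl]
          exact this
        · have hjmem := Finset.mem_filter.mp hjT
          have hjn : j < n := Finset.mem_range.mp hjmem.1
          have hjbig : d j = fq + 1 := hjmem.2
          have hjne : j ≠ n - 1 := by
            intro h
            rw [h] at hjbig
            have hfr : d (r - 2) = fq := hframe.2
            rw [show r - 2 = n - 1 by omega] at hfr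
            omega
          have hj1n : j + 1 < n := by omega
          have hsmall : d (j + 1) = fq := by
            rcases hmem (j + 1) hj1n with h | h
            · exact h
            · exact absurd ⟨hjbig, h⟩ (h3 j (by omega))
          apply exists_maxrun n d fq (j + 1) hj1n hsmall
          intro _
          rw [show j + 1 - 1 = j by omega, hjbig]
          intro h; omega
    rw [hset, Set.ncard_coe_finset]
    have h0nm : 0 ∉ T.image (· + 1) := by
      intro h
      obtain ⟨j, _, hj⟩ := Finset.mem_image.mp h
      omega
    rw [Finset.card_insert_of_notMem h0nm,
      Finset.card_image_of_injective _ (add_left_injective 1)]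
    omega
  exact ⟨h1c, h2, h3, h4, h5⟩
end

section
/- Let p ≥ 3 be a prime and let 3 ≤ r < s be integers with (r-1) ∤ (s-1), and let g be the least positive residue of s-1 modulo r-1. Suppose d ∈ Biv*(s,r) satisfies h_p(δ^{-1}(d)) = min h_p and 2g ≤ r-2. Then θ_max(d) = 1 and η(d) := η_max(d) - η_min(d) ≤ 1; that is, every maximal [q+1]-block of d is a singleton, and the lengths of any two maximal [q]-blocks of d differ by at most 1. -/
set_option linter.unusedSectionVars false

noncomputable section

/-- Geometric tail sum: `Sgeo P c k = Σ_{j<k} P^(-(c 0 + ... + c j))`. -/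
def Sgeo (P : ℝ) (c : ℕ → ℤ) (k : ℕ) : ℝ :=
  ∑ j ∈ Finset.range k, P ^ (-(∑ i ∈ Finset.range (j+1), c i))

section SgeoLemmas

variable {P : ℝ} (hP : 3 ≤ P)

include hP

lemma P_pos : (0:ℝ) < P := by linarith

lemma Sgeo_nonneg (c : ℕ → ℤ) (k : ℕ) : 0 ≤ Sgeo P c k := by
  apply Finset.sum_nonneg
  intro j _
  exact le_of_lt (zpow_pos (P_pos hP) _)

omit hP in
lemma Sgeo_congr {c c' : ℕ → ℤ} {k : ℕ} (h : ∀ i < k, c i = c' i) :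
    Sgeo P c k = Sgeo P c' k := by
  unfold Sgeo
  apply Finset.sum_congr rfl
  intro j hj
  simp only [Finset.mem_range] at hj
  congr 2
  apply Finset.sum_congr rfl
  intro i hi
  simp only [Finset.mem_range] at hi
  exact h i (by omega)

lemma Sgeo_succ (c : ℕ → ℤ) (k : ℕ) :
    Sgeo P c (k+1) = P ^ (-(c 0)) * (1 + Sgeo P (fun i => c (i+1)) k) := by
  have hP0 : P ≠ 0 := ne_of_gt (P_pos hP)
  unfold Sgeo
  rw [Finset.sum_range_succ']
  have h1 : ∀ j, (∑ i ∈ Finset.range (j+1+1), c i) = c 0 + ∑ i ∈ Finset.range (j+1), c (i+1) := by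
    intro j
    rw [Finset.sum_range_succ']
    ring
  have h2 : ∀ j ∈ Finset.range k,
      P ^ (-(∑ i ∈ Finset.range (j+1+1), c i))
        = P ^ (-(c 0)) * P ^ (-(∑ i ∈ Finset.range (j+1), c (i+1))) := by
    intro j _
    rw [h1 j, neg_add, zpow_add₀ hP0]
  rw [Finset.sum_congr rfl h2, ← Finset.mul_sum]
  have : (∑ i ∈ Finset.range (0+1), c i) = c 0 := by simp
  rw [this]
  ring

lemma Sgeo_lb (c : ℕ → ℤ) (k : ℕ) (hk : 1 ≤ k) : P ^ (-(c 0)) ≤ Sgeo P c k := by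
  obtain ⟨k', rfl⟩ : ∃ k', k = k' + 1 := ⟨k - 1, by omega⟩
  rw [Sgeo_succ hP]
  have := Sgeo_nonneg hP (fun i => c (i+1)) k'
  nlinarith [zpow_pos (P_pos hP) (-(c 0))]

lemma Sgeo_ub (c : ℕ → ℤ) (k : ℕ) (hc : ∀ i < k, 1 ≤ c i) :
    Sgeo P c k ≤ P ^ (-(c 0)) * (P / (P - 1)) := by
  induction k generalizing c with
  | zero =>
    have h1 : (0:ℝ) < P ^ (-(c 0)) := zpow_pos (P_pos hP) _
    have h2 : (0:ℝ) < P / (P-1) := by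
      apply div_pos (P_pos hP); linarith
    simp only [Sgeo, Finset.range_zero, Finset.sum_empty]
    positivity
  | succ k ih =>
    rw [Sgeo_succ hP]
    have hpos : (0:ℝ) < P ^ (-(c 0)) := zpow_pos (P_pos hP) _
    rcases Nat.eq_zero_or_pos k with hk | hk
    · subst hk
      simp only [Sgeo, Finset.range_zero, Finset.sum_empty]
      have : (1:ℝ) ≤ P / (P-1) := by
        rw [le_div_iff₀ (by linarith : (0:ℝ) < P - 1)]; linarith
      nlinarith
    · have htail : Sgeo P (fun i => c (i+1)) k ≤ P ^ (-(c 1)) * (P / (P-1)) := by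
        have := ih (fun i => c (i+1)) (fun i hi => hc (i+1) (by omega))
        simpa using this
      have hc1 : 1 ≤ c 1 := hc 1 (by omega)
      have h1 : P ^ (-(c 1)) ≤ P ^ (-(1:ℤ)) := by
        apply zpow_le_zpow_right₀ (by linarith : 1 ≤ P)
        omega
      have h2 : P ^ (-(1:ℤ)) = P⁻¹ := by
        rw [zpow_neg, zpow_one]
      have hPm1 : (0:ℝ) < P - 1 := by linarith
      have key : 1 + Sgeo P (fun i => c (i+1)) k ≤ P / (P-1) := by
        have : Sgeo P (fun i => c (i+1)) k ≤ P⁻¹ * (P/(P-1)) := by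
          calc Sgeo P (fun i => c (i+1)) k ≤ P ^ (-(c 1)) * (P / (P-1)) := htail
          _ ≤ P ^ (-(1:ℤ)) * (P/(P-1)) := by
              apply mul_le_mul_of_nonneg_right h1 (le_of_lt (div_pos (P_pos hP) hPm1))
          _ = P⁻¹ * (P/(P-1)) := by rw [h2]
        have hinv : P⁻¹ * (P/(P-1)) = 1/(P-1) := by
          field_simp
        rw [hinv] at this
        have : 1 + Sgeo P (fun i => c (i+1)) k ≤ 1 + 1/(P-1) := by linarith
        calc 1 + Sgeo P (fun i => c (i+1)) k ≤ 1 + 1/(P-1) := this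
        _ = P/(P-1) := by field_simp; ring
      calc P ^ (-(c 0)) * (1 + Sgeo P (fun i => c (i+1)) k)
          ≤ P ^ (-(c 0)) * (P/(P-1)) := by
            apply mul_le_mul_of_nonneg_left key (le_of_lt hpos)

/-- Main comparison lemma: lexicographic domination implies strict inequality of tails. -/
lemma Sgeo_lt (J : ℕ) : ∀ (c c' : ℕ → ℤ) (k k' : ℕ),
    (∀ i < k, 1 ≤ c i) → (∀ i < k', 1 ≤ c' i) → (∀ j < J, c j = c' j) →
    ((k = J ∧ J < k') ∨ (J < k ∧ J < k' ∧ c' J + 1 ≤ c J)) →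
    Sgeo P c k < Sgeo P c' k' := by
  induction J with
  | zero =>
    intro c c' k k' hc hc' _ hcase
    rcases hcase with ⟨hk, hk'⟩ | ⟨hk, hk', hdiff⟩
    · subst hk
      have h1 : P ^ (-(c' 0)) ≤ Sgeo P c' k' := Sgeo_lb hP c' k' (by omega)
      have h2 : (0:ℝ) < P ^ (-(c' 0)) := zpow_pos (P_pos hP) _
      have h0 : Sgeo P c 0 = 0 := by simp [Sgeo]
      rw [h0]; linarith
    · have hub : Sgeo P c k ≤ P ^ (-(c 0)) * (P/(P-1)) := Sgeo_ub hP c k hc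
      have hlb : P ^ (-(c' 0)) ≤ Sgeo P c' k' := Sgeo_lb hP c' k' (by omega)
      have hPm1 : (0:ℝ) < P - 1 := by linarith
      have h1 : P ^ (-(c 0)) ≤ P ^ (-(c' 0) - 1) := by
        apply zpow_le_zpow_right₀ (by linarith : 1 ≤ P)
        omega
      have h2 : P ^ (-(c' 0) - 1) = P ^ (-(c' 0)) * P⁻¹ := by
        rw [zpow_sub₀ (ne_of_gt (P_pos hP)), zpow_one]
        ring
      have h3 : (0:ℝ) < P ^ (-(c' 0)) := zpow_pos (P_pos hP) _
      have key : P ^ (-(c 0)) * (P/(P-1)) < P ^ (-(c' 0)) := by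
        calc P ^ (-(c 0)) * (P/(P-1)) ≤ P ^ (-(c' 0)) * P⁻¹ * (P/(P-1)) := by
              rw [← h2]; exact mul_le_mul_of_nonneg_right h1 (le_of_lt (div_pos (P_pos hP) hPm1))
        _ = P ^ (-(c' 0)) * (1/(P-1)) := by
              field_simp
        _ < P ^ (-(c' 0)) := by
              nlinarith [(div_lt_one (by linarith : (0:ℝ) < P - 1)).mpr (by linarith : (1:ℝ) < P - 1)]
      linarith
  | succ J ih =>
    intro c c' k k' hc hc' hag hcase
    have hk1 : 1 ≤ k := by omega
    have hk'1 : 1 ≤ k' := by omega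
    obtain ⟨k1, rfl⟩ : ∃ k1, k = k1 + 1 := ⟨k - 1, by omega⟩
    obtain ⟨k1', rfl⟩ : ∃ k1', k' = k1' + 1 := ⟨k' - 1, by omega⟩
    rw [Sgeo_succ hP, Sgeo_succ hP]
    have h0 : c 0 = c' 0 := hag 0 (by omega)
    rw [h0]
    have hpos : (0:ℝ) < P ^ (-(c' 0)) := zpow_pos (P_pos hP) _
    have htail : Sgeo P (fun i => c (i+1)) k1 < Sgeo P (fun i => c' (i+1)) k1' := by
      apply ih
      · intro i hi; exact hc (i+1) (by omega)
      · intro i hi; exact hc' (i+1) (by omega)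
      · intro j hj; exact hag (j+1) (by omega)
      · rcases hcase with ⟨hk, hk'⟩ | ⟨hk, hk', hdiff⟩
        · left; constructor <;> omega
        · right; refine ⟨by omega, by omega, hdiff⟩
    nlinarith

end SgeoLemmas


section HP

variable {p r : ℕ}

/-- Effect of moving one point on `hp`. -/
lemma hp_update (a : ℕ → ℤ) (t : ℕ) (ht : t < r) (v : ℤ) :
    hp p r (Function.update a t v) = hp p r a
      + (∑ k ∈ Finset.range t, ((p:ℝ) ^ (a k - v) - (p:ℝ) ^ (a k - a t)))
      + (∑ i ∈ Finset.Ico (t+1) r, ((p:ℝ) ^ (v - a i) - (p:ℝ) ^ (a t - a i))) := by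
  classical
  set b := Function.update a t v with hb
  have hbt : b t = v := Function.update_self t v a
  have hbne : ∀ j, j ≠ t → b j = a j := fun j hj => Function.update_of_ne hj v a
  have key : hp p r b - hp p r a
      = ∑ k ∈ Finset.range r, (∑ i ∈ Finset.range r,
          ((if k < i then (p:ℝ) ^ (b k - b i) else 0) - (if k < i then (p:ℝ) ^ (a k - a i) else 0))) := by
    unfold hp
    rw [← Finset.sum_sub_distrib]
    apply Finset.sum_congr rfl
    intro k _
    rw [← Finset.sum_sub_distrib]
  -- inner sums
  have inner_ne : ∀ k, k ≠ t → (∑ i ∈ Finset.range r,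
      ((if k < i then (p:ℝ) ^ (b k - b i) else 0) - (if k < i then (p:ℝ) ^ (a k - a i) else 0)))
      = ((if k < t then (p:ℝ) ^ (a k - v) else 0) - (if k < t then (p:ℝ) ^ (a k - a t) else 0)) := by
    intro k hk
    rw [Finset.sum_eq_single t]
    · rw [hbne k hk, hbt]
    · intro i hi hit
      rw [hbne k hk, hbne i hit]
      ring
    · intro hnt
      exact absurd (Finset.mem_range.mpr ht) hnt
  have inner_t : (∑ i ∈ Finset.range r,
      ((if t < i then (p:ℝ) ^ (b t - b i) else 0) - (if t < i then (p:ℝ) ^ (a t - a i) else 0)))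
      = ∑ i ∈ Finset.Ico (t+1) r, ((p:ℝ) ^ (v - a i) - (p:ℝ) ^ (a t - a i)) := by
    have h1 : ∀ i ∈ Finset.range r,
        ((if t < i then (p:ℝ) ^ (b t - b i) else 0) - (if t < i then (p:ℝ) ^ (a t - a i) else 0))
        = (if t < i then ((p:ℝ) ^ (v - a i) - (p:ℝ) ^ (a t - a i)) else 0) := by
      intro i _
      by_cases hti : t < i
      · simp only [hti, if_true, hbt, hbne i (by omega)]
      · simp only [hti, if_false]; ring
    rw [Finset.sum_congr rfl h1, ← Finset.sum_filter]
    apply Finset.sum_congr _ (fun _ _ => rfl)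
    ext i
    simp only [Finset.mem_filter, Finset.mem_range, Finset.mem_Ico]
    omega
  have split : hp p r b - hp p r a
      = (∑ i ∈ Finset.Ico (t+1) r, ((p:ℝ) ^ (v - a i) - (p:ℝ) ^ (a t - a i)))
        + ∑ k ∈ (Finset.range r).erase t,
            ((if k < t then (p:ℝ) ^ (a k - v) else 0) - (if k < t then (p:ℝ) ^ (a k - a t) else 0)) := by
    rw [key, ← Finset.add_sum_erase _ _ (Finset.mem_range.mpr ht), inner_t]
    congr 1
    apply Finset.sum_congr rfl
    intro k hk
    exact inner_ne k (Finset.ne_of_mem_erase hk)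
  have last : ∑ k ∈ (Finset.range r).erase t,
      ((if k < t then (p:ℝ) ^ (a k - v) else 0) - (if k < t then (p:ℝ) ^ (a k - a t) else 0))
      = ∑ k ∈ Finset.range t, ((p:ℝ) ^ (a k - v) - (p:ℝ) ^ (a k - a t)) := by
    rw [Finset.sum_erase]
    · have h2 : ∀ k ∈ Finset.range r,
          ((if k < t then (p:ℝ) ^ (a k - v) else 0) - (if k < t then (p:ℝ) ^ (a k - a t) else 0))
          = (if k < t then ((p:ℝ) ^ (a k - v) - (p:ℝ) ^ (a k - a t)) else 0) := by
        intro k _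
        by_cases hkt : k < t
        · simp [hkt]
        · simp [hkt]
      rw [Finset.sum_congr rfl h2, ← Finset.sum_filter]
      apply Finset.sum_congr _ (fun _ _ => rfl)
      ext k
      simp only [Finset.mem_filter, Finset.mem_range]
      omega
    · simp
  rw [last] at split
  linarith [split]

lemma deltaInv_diff (d : ℕ → ℤ) {k t : ℕ} (h : k ≤ t) :
    deltaInv d t - deltaInv d k = ∑ q ∈ Finset.Ico k t, d q := by
  unfold deltaInv
  rw [Finset.sum_Ico_eq_sub _ h]

lemma sum_Ico_reflect (d : ℕ → ℤ) (k t : ℕ) (h : k ≤ t) :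
    ∑ q ∈ Finset.Ico k t, d q = ∑ i ∈ Finset.range (t - k), d (t - 1 - i) := by
  rw [Finset.sum_Ico_eq_sum_range]
  rw [← Finset.sum_range_reflect]
  apply Finset.sum_congr rfl
  intro i hi
  simp only [Finset.mem_range] at hi
  congr 1
  omega

/-- Left tail sum as `Sgeo`. -/
lemma Lsum_eq (d : ℕ → ℤ) (t : ℕ) :
    (∑ k ∈ Finset.range t, (p:ℝ) ^ (deltaInv d k - deltaInv d t))
      = Sgeo (p:ℝ) (fun j => d (t - 1 - j)) t := by
  unfold Sgeo
  rw [← Finset.sum_range_reflect]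
  apply Finset.sum_congr rfl
  intro j hj
  simp only [Finset.mem_range] at hj
  congr 1
  have h1 : t - 1 - j ≤ t := by omega
  have h2 : deltaInv d t - deltaInv d (t - 1 - j) = ∑ q ∈ Finset.Ico (t - 1 - j) t, d q :=
    deltaInv_diff d h1
  have h3 : ∑ q ∈ Finset.Ico (t - 1 - j) t, d q = ∑ i ∈ Finset.range (t - (t - 1 - j)), d (t - 1 - i) :=
    sum_Ico_reflect d _ t h1
  have h4 : t - (t - 1 - j) = j + 1 := by omega
  rw [h4] at h3
  have hb : ∑ i ∈ Finset.range (j+1), (fun j => d (t - 1 - j)) i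
      = ∑ i ∈ Finset.range (j+1), d (t - 1 - i) := rfl
  rw [hb]
  omega

/-- Right tail sum as `Sgeo`. -/
lemma Rsum_eq (d : ℕ → ℤ) (t n : ℕ) (ht : t ≤ n) :
    (∑ i ∈ Finset.Ico (t+1) (n+1), (p:ℝ) ^ (deltaInv d t - deltaInv d i))
      = Sgeo (p:ℝ) (fun j => d (t + j)) (n - t) := by
  unfold Sgeo
  rw [Finset.sum_Ico_eq_sum_range]
  have hn : n + 1 - (t + 1) = n - t := by omega
  rw [hn]
  apply Finset.sum_congr rfl
  intro j hj
  simp only [Finset.mem_range] at hj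
  congr 1
  have h1 : t ≤ t + 1 + j := by omega
  have h2 : deltaInv d (t+1+j) - deltaInv d t = ∑ q ∈ Finset.Ico t (t+1+j), d q :=
    deltaInv_diff d h1
  have h3 : ∑ q ∈ Finset.Ico t (t+1+j), d q = ∑ i ∈ Finset.range (j+1), d (t + i) := by
    rw [Finset.sum_Ico_eq_sum_range]
    have : t + 1 + j - t = j + 1 := by omega
    rw [this]
  have hb : ∑ i ∈ Finset.range (j+1), (fun j => d (t + j)) i
      = ∑ i ∈ Finset.range (j+1), d (t + i) := rfl
  rw [hb]
  omega

lemma deltaInv_rev (d : ℕ → ℤ) (n : ℕ) {i : ℕ} (hi : i ≤ n) :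
    deltaInv (fun j => d (n - 1 - j)) i = deltaInv d n - deltaInv d (n - i) := by
  rw [deltaInv_diff d (by omega : n - i ≤ n), sum_Ico_reflect d (n - i) n (by omega)]
  unfold deltaInv
  have : n - (n - i) = i := by omega
  rw [this]

/-- `hp` is invariant under reversal of the gap vector. -/
lemma hp_rev (d : ℕ → ℤ) (n : ℕ) :
    hp p (n+1) (deltaInv (fun j => d (n - 1 - j))) = hp p (n+1) (deltaInv d) := by
  unfold hp
  rw [← Finset.sum_product', ← Finset.sum_product']
  apply Finset.sum_nbij' (fun q => (n - q.2, n - q.1)) (fun q => (n - q.2, n - q.1))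
  · intro q hq
    simp only [Finset.mem_product, Finset.mem_range] at hq ⊢
    omega
  · intro q hq
    simp only [Finset.mem_product, Finset.mem_range] at hq ⊢
    omega
  · intro q hq
    simp only [Finset.mem_product, Finset.mem_range] at hq
    ext <;> simp <;> omega
  · intro q hq
    simp only [Finset.mem_product, Finset.mem_range] at hq
    ext <;> simp <;> omega
  · intro q hq
    simp only [Finset.mem_product, Finset.mem_range] at hq
    obtain ⟨hk, hi⟩ := hq
    by_cases h : q.1 < q.2
    · have h' : n - q.2 < n - q.1 := by omega
      simp only [h, h', if_true]
      congr 1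
      rw [deltaInv_rev d n (by omega), deltaInv_rev d n (by omega)]
      ring
    · have h' : ¬ (n - q.2 < n - q.1) := by omega
      simp [h, h']

end HP

/-- Bundled context for the combinatorial argument. -/
structure Cfg where
  p : ℕ
  s : ℕ
  r : ℕ
  n : ℕ
  m : ℤ
  d : ℕ → ℤ
  hp3 : 3 ≤ p
  hn : n = r - 1
  hr : 3 ≤ r
  hm : 1 ≤ m
  hd : ∀ j < n, d j = m ∨ d j = m + 1
  hsum : ∑ j ∈ Finset.range n, d j = (s:ℤ) - 1
  hmin : ∀ b : ℕ → ℤ, Admissible s r b → hp p r (deltaInv d) ≤ hp p r b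

namespace Cfg

variable (C : Cfg)

lemma hPR : (3:ℝ) ≤ (C.p : ℝ) := by exact_mod_cast C.hp3

lemma hP0 : (0:ℝ) < (C.p : ℝ) := by linarith [C.hPR]

lemma hn2 : 2 ≤ C.n := by have := C.hr; have := C.hn; omega

lemma hrn : C.r = C.n + 1 := by have := C.hr; have := C.hn; omega

lemma d_ge_one {j : ℕ} (hj : j < C.n) : 1 ≤ C.d j := by
  rcases C.hd j hj with h | h <;> (rw [h]; linarith [C.hm])

lemma a_last : deltaInv C.d C.n = (C.s : ℤ) - 1 := C.hsum

lemma a_succ (i : ℕ) : deltaInv C.d (i+1) = deltaInv C.d i + C.d i := by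
  unfold deltaInv
  rw [Finset.sum_range_succ]

/-- The mirrored configuration. -/
def mirror : Cfg where
  p := C.p
  s := C.s
  r := C.r
  n := C.n
  m := C.m
  d := fun j => C.d (C.n - 1 - j)
  hp3 := C.hp3
  hn := C.hn
  hr := C.hr
  hm := C.hm
  hd := fun j hj => C.hd (C.n - 1 - j) (by omega)
  hsum := by
    rw [Finset.sum_range_reflect]
    exact C.hsum
  hmin := by
    intro b hb
    rw [C.hrn, hp_rev C.d C.n, ← C.hrn]
    exact C.hmin b hb

lemma mirror_d (j : ℕ) : C.mirror.d j = C.d (C.n - 1 - j) := rfl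

/-- If the "move-left-point-down" certificate holds, contradiction with minimality. -/
lemma improve_down (t : ℕ) (h1 : 1 ≤ t) (h2 : t < C.n)
    (hg1 : C.d (t-1) = C.m + 1) (hg2 : C.d t = C.m)
    (hS : Sgeo (C.p:ℝ) (fun j => C.d (t-2-j)) (t-1)
        < Sgeo (C.p:ℝ) (fun j => C.d (t+1+j)) (C.n-t-1)) : False := by
  have hP := C.hPR
  have hP0 := C.hP0
  have hP0' : ((C.p:ℝ)) ≠ 0 := ne_of_gt hP0
  set P := (C.p : ℝ)
  set a := deltaInv C.d with ha
  set b := Function.update a t (a t - 1) with hb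
  have hadm : Admissible C.s C.r b := by
    refine ⟨?_, ?_, ?_⟩
    · rw [hb, Function.update_of_ne (by omega : (0:ℕ) ≠ t)]
      simp [ha, deltaInv]
    · rw [hb, Function.update_of_ne (by have := C.hrn; omega : C.r - 1 ≠ t)]
      have : C.r - 1 = C.n := by have := C.hrn; omega
      rw [this, ha]
      exact C.a_last
    · intro i hi
      have hin : i < C.n := by have := C.hrn; omega
      have gap : a (i+1) = a i + C.d i := C.a_succ i
      have hge : 1 ≤ C.d i := C.d_ge_one hin
      rcases Nat.lt_trichotomy (i+1) t with h | h | h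
      · rw [hb, Function.update_of_ne (by omega : i ≠ t),
            Function.update_of_ne (by omega : i + 1 ≠ t)]
        omega
      · -- i + 1 = t
        rw [hb, Function.update_of_ne (by omega : i ≠ t), h, Function.update_self]
        rw [h] at gap
        have hd1 : C.d i = C.m + 1 := by
          have hit : i = t - 1 := by omega
          rw [hit]; exact hg1
        have := C.hm
        omega
      · by_cases hit : i = t
        · rw [hb, hit, Function.update_self,
              Function.update_of_ne (by omega : t + 1 ≠ t)]
          have gap' : a (t+1) = a t + C.d t := C.a_succ t
          have : 1 ≤ C.d t := C.d_ge_one (by omega)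
          omega
        · rw [hb, Function.update_of_ne (by omega : i ≠ t),
              Function.update_of_ne (by omega : i + 1 ≠ t)]
          omega
  have hle := C.hmin b hadm
  -- compute hp b
  have hupd := hp_update (p := C.p) (r := C.r) a t (by have := C.hrn; omega) (a t - 1)
  rw [← hb] at hupd
  -- rewrite the two sums
  have hL : (∑ k ∈ Finset.range t, ((P:ℝ) ^ (a k - (a t - 1)) - (P:ℝ) ^ (a k - a t)))
      = (P - 1) * ∑ k ∈ Finset.range t, (P:ℝ) ^ (a k - a t) := by
    rw [Finset.mul_sum]
    apply Finset.sum_congr rfl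
    intro k _
    have : a k - (a t - 1) = (a k - a t) + 1 := by ring
    rw [this, zpow_add₀ hP0', zpow_one]
    ring
  have hR : (∑ i ∈ Finset.Ico (t+1) C.r, ((P:ℝ) ^ ((a t - 1) - a i) - (P:ℝ) ^ (a t - a i)))
      = (P⁻¹ - 1) * ∑ i ∈ Finset.Ico (t+1) C.r, (P:ℝ) ^ (a t - a i) := by
    rw [Finset.mul_sum]
    apply Finset.sum_congr rfl
    intro i _
    have : (a t - 1) - a i = (a t - a i) + (-1) := by ring
    rw [this, zpow_add₀ hP0', zpow_neg, zpow_one]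
    ring
  set L := ∑ k ∈ Finset.range t, (P:ℝ) ^ (a k - a t) with hLdef
  set R := ∑ i ∈ Finset.Ico (t+1) C.r, (P:ℝ) ^ (a t - a i) with hRdef
  rw [hL, hR] at hupd
  -- identify L and R with Sgeo
  have hLS : L = P ^ (-(C.m + 1)) * (1 + Sgeo P (fun j => C.d (t-2-j)) (t-1)) := by
    have e1 : L = Sgeo P (fun j => C.d (t - 1 - j)) t := Lsum_eq (p := C.p) C.d t
    obtain ⟨t', rfl⟩ : ∃ t', t = t' + 1 := ⟨t - 1, by omega⟩
    rw [e1, Sgeo_succ hP]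
    have e2 : C.d (t' + 1 - 1 - 0) = C.m + 1 := by
      simpa using hg1
    rw [e2]
    congr 2
    apply Sgeo_congr
    intro i hi
    congr 1
    omega
  have hRS : R = P ^ (-C.m) * (1 + Sgeo P (fun j => C.d (t+1+j)) (C.n-t-1)) := by
    have e1 : R = Sgeo P (fun j => C.d (t + j)) (C.n - t) := by
      rw [hRdef, C.hrn]
      exact Rsum_eq (p := C.p) C.d t C.n (by omega)
    rw [e1]
    obtain ⟨u, hu⟩ : ∃ u, C.n - t = u + 1 := ⟨C.n - t - 1, by omega⟩
    rw [hu, Sgeo_succ hP]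
    have e2 : C.d (t + 0) = C.m := by simpa using hg2
    rw [e2]
    have hu' : u = C.n - t - 1 := by omega
    rw [hu']
    congr 2
    apply Sgeo_congr
    intro i hi
    congr 1
    omega
  -- key inequality P * L < R
  have hkey : P * L < R := by
    rw [hLS, hRS]
    have ezp : P * P ^ (-(C.m+1)) = P ^ (-C.m) := by
      rw [show -(C.m+1) = -C.m + (-1) by ring, zpow_add₀ hP0', zpow_neg_one]
      field_simp
    have hpow : (0:ℝ) < P ^ (-C.m) := zpow_pos hP0 _
    calc P * (P ^ (-(C.m+1)) * (1 + Sgeo P (fun j => C.d (t-2-j)) (t-1)))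
        = P ^ (-C.m) * (1 + Sgeo P (fun j => C.d (t-2-j)) (t-1)) := by
          rw [← ezp]; ring
      _ < P ^ (-C.m) * (1 + Sgeo P (fun j => C.d (t+1+j)) (C.n-t-1)) := by
          apply mul_lt_mul_of_pos_left _ hpow
          linarith
  have hLpos : 0 ≤ L := by
    apply Finset.sum_nonneg; intro k _; exact le_of_lt (zpow_pos hP0 _)
  have hfinal : (P - 1) * L + (P⁻¹ - 1) * R < 0 := by
    have h1 : (1 - P⁻¹) * (P * L) = (P - 1) * L := by
      field_simp
    have h2 : (1 - P⁻¹) * (P * L) < (1 - P⁻¹) * R := by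
      apply mul_lt_mul_of_pos_left hkey
      have : P⁻¹ < 1 := by
        rw [inv_lt_one_iff₀]
        right; linarith
      linarith
    nlinarith
  linarith [hle, hupd, hfinal]

/-- If the "move-point-up" certificate holds, contradiction with minimality. -/
lemma improve_up (t : ℕ) (h1 : 1 ≤ t) (h2 : t < C.n)
    (hg1 : C.d (t-1) = C.m) (hg2 : C.d t = C.m + 1)
    (hS : Sgeo (C.p:ℝ) (fun j => C.d (t+1+j)) (C.n-t-1)
        < Sgeo (C.p:ℝ) (fun j => C.d (t-2-j)) (t-1)) : False := by
  have hP := C.hPR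
  have hP0 := C.hP0
  have hP0' : ((C.p:ℝ)) ≠ 0 := ne_of_gt hP0
  set P := (C.p : ℝ)
  set a := deltaInv C.d with ha
  set b := Function.update a t (a t + 1) with hb
  have hadm : Admissible C.s C.r b := by
    refine ⟨?_, ?_, ?_⟩
    · rw [hb, Function.update_of_ne (by omega : (0:ℕ) ≠ t)]
      simp [ha, deltaInv]
    · rw [hb, Function.update_of_ne (by have := C.hrn; omega : C.r - 1 ≠ t)]
      have : C.r - 1 = C.n := by have := C.hrn; omega
      rw [this, ha]
      exact C.a_last
    · intro i hi
      have hin : i < C.n := by have := C.hrn; omega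
      have gap : a (i+1) = a i + C.d i := C.a_succ i
      have hge : 1 ≤ C.d i := C.d_ge_one hin
      rcases Nat.lt_trichotomy (i+1) t with h | h | h
      · rw [hb, Function.update_of_ne (by omega : i ≠ t),
            Function.update_of_ne (by omega : i + 1 ≠ t)]
        omega
      · rw [hb, Function.update_of_ne (by omega : i ≠ t), h, Function.update_self]
        rw [h] at gap
        omega
      · by_cases hit : i = t
        · rw [hb, hit, Function.update_self,
              Function.update_of_ne (by omega : t + 1 ≠ t)]
          have gap' : a (t+1) = a t + C.d t := C.a_succ t
          have : C.d t = C.m + 1 := hg2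
          have := C.hm
          omega
        · rw [hb, Function.update_of_ne (by omega : i ≠ t),
              Function.update_of_ne (by omega : i + 1 ≠ t)]
          omega
  have hle := C.hmin b hadm
  have hupd := hp_update (p := C.p) (r := C.r) a t (by have := C.hrn; omega) (a t + 1)
  rw [← hb] at hupd
  have hL : (∑ k ∈ Finset.range t, ((P:ℝ) ^ (a k - (a t + 1)) - (P:ℝ) ^ (a k - a t)))
      = (P⁻¹ - 1) * ∑ k ∈ Finset.range t, (P:ℝ) ^ (a k - a t) := by
    rw [Finset.mul_sum]
    apply Finset.sum_congr rfl
    intro k _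
    have : a k - (a t + 1) = (a k - a t) + (-1) := by ring
    rw [this, zpow_add₀ hP0', zpow_neg, zpow_one]
    ring
  have hR : (∑ i ∈ Finset.Ico (t+1) C.r, ((P:ℝ) ^ ((a t + 1) - a i) - (P:ℝ) ^ (a t - a i)))
      = (P - 1) * ∑ i ∈ Finset.Ico (t+1) C.r, (P:ℝ) ^ (a t - a i) := by
    rw [Finset.mul_sum]
    apply Finset.sum_congr rfl
    intro i _
    have : (a t + 1) - a i = (a t - a i) + 1 := by ring
    rw [this, zpow_add₀ hP0', zpow_one]
    ring
  set L := ∑ k ∈ Finset.range t, (P:ℝ) ^ (a k - a t) with hLdef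
  set R := ∑ i ∈ Finset.Ico (t+1) C.r, (P:ℝ) ^ (a t - a i) with hRdef
  rw [hL, hR] at hupd
  have hLS : L = P ^ (-C.m) * (1 + Sgeo P (fun j => C.d (t-2-j)) (t-1)) := by
    have e1 : L = Sgeo P (fun j => C.d (t - 1 - j)) t := Lsum_eq (p := C.p) C.d t
    obtain ⟨t', rfl⟩ : ∃ t', t = t' + 1 := ⟨t - 1, by omega⟩
    rw [e1, Sgeo_succ hP]
    have e2 : C.d (t' + 1 - 1 - 0) = C.m := by simpa using hg1
    rw [e2]
    congr 2
    apply Sgeo_congr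
    intro i hi
    congr 1
    omega
  have hRS : R = P ^ (-(C.m+1)) * (1 + Sgeo P (fun j => C.d (t+1+j)) (C.n-t-1)) := by
    have e1 : R = Sgeo P (fun j => C.d (t + j)) (C.n - t) := by
      rw [hRdef, C.hrn]
      exact Rsum_eq (p := C.p) C.d t C.n (by omega)
    rw [e1]
    obtain ⟨u, hu⟩ : ∃ u, C.n - t = u + 1 := ⟨C.n - t - 1, by omega⟩
    rw [hu, Sgeo_succ hP]
    have e2 : C.d (t + 0) = C.m + 1 := by simpa using hg2
    rw [e2]
    have hu' : u = C.n - t - 1 := by omega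
    rw [hu']
    congr 2
    apply Sgeo_congr
    intro i hi
    congr 1
    omega
  have hkey : P * R < L := by
    rw [hLS, hRS]
    have ezp : P * P ^ (-(C.m+1)) = P ^ (-C.m) := by
      rw [show -(C.m+1) = -C.m + (-1) by ring, zpow_add₀ hP0', zpow_neg_one]
      field_simp
    have hpow : (0:ℝ) < P ^ (-C.m) := zpow_pos hP0 _
    calc P * (P ^ (-(C.m+1)) * (1 + Sgeo P (fun j => C.d (t+1+j)) (C.n-t-1)))
        = P ^ (-C.m) * (1 + Sgeo P (fun j => C.d (t+1+j)) (C.n-t-1)) := by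
          rw [← ezp]; ring
      _ < P ^ (-C.m) * (1 + Sgeo P (fun j => C.d (t-2-j)) (t-1)) := by
          apply mul_lt_mul_of_pos_left _ hpow
          linarith
  have hfinal : (P⁻¹ - 1) * L + (P - 1) * R < 0 := by
    have h2 : (1 - P⁻¹) * (P * R) < (1 - P⁻¹) * L := by
      apply mul_lt_mul_of_pos_left hkey
      have : P⁻¹ < 1 := by
        rw [inv_lt_one_iff₀]
        right; linarith
      linarith
    have h1 : (1 - P⁻¹) * (P * R) = (P - 1) * R := by
      field_simp
    nlinarith
  linarith [hle, hupd, hfinal]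

/-- Certificate for improving by moving a point down (the separating `m+1` moves right). -/
lemma cert_down (t : ℕ) (h1 : 1 ≤ t) (h2 : t < C.n)
    (hg1 : C.d (t-1) = C.m + 1) (hg2 : C.d t = C.m) (J : ℕ)
    (hag : ∀ j < J, C.d (t-2-j) = C.d (t+1+j))
    (hcase : (t - 1 = J ∧ J < C.n - t - 1)
      ∨ (J < t - 1 ∧ J < C.n - t - 1 ∧ C.d (t+1+J) + 1 ≤ C.d (t-2-J))) : False := by
  apply C.improve_down t h1 h2 hg1 hg2
  apply Sgeo_lt C.hPR J
  · intro i hi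
    exact C.d_ge_one (by omega)
  · intro i hi
    exact C.d_ge_one (by omega)
  · intro j hj
    exact hag j hj
  · exact hcase

/-- Certificate for improving by moving a point up (the separating `m+1` moves left). -/
lemma cert_up (t : ℕ) (h1 : 1 ≤ t) (h2 : t < C.n)
    (hg1 : C.d (t-1) = C.m) (hg2 : C.d t = C.m + 1) (J : ℕ)
    (hag : ∀ j < J, C.d (t-2-j) = C.d (t+1+j))
    (hcase : (C.n - t - 1 = J ∧ J < t - 1)
      ∨ (J < C.n - t - 1 ∧ J < t - 1 ∧ C.d (t-2-J) + 1 ≤ C.d (t+1+J))) : False := by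
  apply C.improve_up t h1 h2 hg1 hg2
  apply Sgeo_lt C.hPR J
  · intro i hi
    exact C.d_ge_one (by omega)
  · intro i hi
    exact C.d_ge_one (by omega)
  · intro j hj
    exact (hag j hj).symm
  · exact hcase

/-- A maximal run of `m`'s (possibly empty), given by its interval `[x, y)`. -/
def IsGap (x y : ℕ) : Prop :=
  x ≤ y ∧ y ≤ C.n ∧ (∀ k, x ≤ k → k < y → C.d k = C.m) ∧
    (x = 0 ∨ C.d (x-1) = C.m + 1) ∧ (y = C.n ∨ C.d y = C.m + 1)

lemma m_ne : C.m ≠ C.m + 1 := by omega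

lemma gap_right : ∀ f z, z ≤ C.n → C.n - z ≤ f →
    ∃ v, z ≤ v ∧ v ≤ C.n ∧ (∀ k, z ≤ k → k < v → C.d k = C.m) ∧
      (v = C.n ∨ C.d v = C.m + 1) := by
  intro f
  induction f with
  | zero =>
    intro z hz hf
    exact ⟨z, le_refl z, hz, fun k h1 h2 => absurd (lt_of_le_of_lt h1 h2) (by omega), Or.inl (by omega)⟩
  | succ f ih =>
    intro z hz hf
    by_cases hzn : z = C.n
    · exact ⟨z, le_refl z, hz, fun k h1 h2 => absurd (lt_of_le_of_lt h1 h2) (by omega), Or.inl hzn⟩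
    · rcases C.hd z (by omega) with hm | hm
      · obtain ⟨v, hv1, hv2, hv3, hv4⟩ := ih (z+1) (by omega) (by omega)
        refine ⟨v, by omega, hv2, ?_, hv4⟩
        intro k h1 h2
        rcases Nat.eq_or_lt_of_le h1 with h | h
        · rw [← h]; exact hm
        · exact hv3 k (by omega) h2
      · exact ⟨z, le_refl z, hz, fun k h1 h2 => absurd (lt_of_le_of_lt h1 h2) (by omega), Or.inr hm⟩

lemma gap_left : ∀ f w, w ≤ C.n → w ≤ f →
    ∃ u, u ≤ w ∧ (∀ k, u ≤ k → k < w → C.d k = C.m) ∧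
      (u = 0 ∨ C.d (u-1) = C.m + 1) := by
  intro f
  induction f with
  | zero =>
    intro w hw hf
    exact ⟨w, le_refl w, fun k h1 h2 => absurd (lt_of_le_of_lt h1 h2) (by omega), Or.inl (by omega)⟩
  | succ f ih =>
    intro w hw hf
    rcases Nat.eq_zero_or_pos w with h0 | h0
    · exact ⟨w, le_refl w, fun k h1 h2 => absurd (lt_of_le_of_lt h1 h2) (by omega), Or.inl h0⟩
    · rcases C.hd (w-1) (by omega) with hm | hm
      · obtain ⟨u, hu1, hu2, hu3⟩ := ih (w-1) (by omega) (by omega)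
        refine ⟨u, by omega, ?_, hu3⟩
        intro k h1 h2
        rcases Nat.lt_or_ge k (w-1) with h | h
        · exact hu2 k h1 h
        · rw [show k = w - 1 by omega]; exact hm
      · exact ⟨w, le_refl w, fun k h1 h2 => absurd (lt_of_le_of_lt h1 h2) (by omega), Or.inr (by
          have : w - 1 = w - 1 := rfl
          exact hm)⟩

lemma gap_disj {x y x' y' : ℕ} (h : C.IsGap x y) (h' : C.IsGap x' y') (hxx : x < x') :
    y ≤ x' := by
  by_contra hcon
  push_neg at hcon
  have h1 : C.d (x'-1) = C.m := h.2.2.1 (x'-1) (by omega) (by omega)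
  rcases h'.2.2.2.1 with h2 | h2
  · omega
  · rw [h1] at h2
    exact C.m_ne h2

lemma IsGap_mirror {x y : ℕ} (h : C.IsGap x y) :
    C.mirror.IsGap (C.n - y) (C.n - x) := by
  obtain ⟨hxy, hyn, hlet, hbl, hbr⟩ := h
  have hmn : C.mirror.n = C.n := rfl
  refine ⟨by omega, by rw [hmn]; omega, ?_, ?_, ?_⟩
  · intro k h1 h2
    have : C.mirror.d k = C.d (C.n - 1 - k) := rfl
    rw [this]
    exact hlet (C.n - 1 - k) (by omega) (by omega)
  · by_cases hyn' : y = C.n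
    · left; omega
    · have hh : C.d y = C.m + 1 := by
        rcases hbr with h | h
        · omega
        · exact h
      right
      have : C.mirror.d (C.n - y - 1) = C.d (C.n - 1 - (C.n - y - 1)) := rfl
      rw [this, show C.n - 1 - (C.n - y - 1) = y by omega]
      exact hh
  · by_cases hx0 : x = 0
    · left; rw [hmn]; omega
    · have hh : C.d (x-1) = C.m + 1 := by
        rcases hbl with h | h
        · omega
        · exact h
      right
      have : C.mirror.d (C.n - x) = C.d (C.n - 1 - (C.n - x)) := rfl
      rw [this, show C.n - 1 - (C.n - x) = x - 1 by omega]
      exact hh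

/-- Prefix certificate at the separator right of gap ending at `y`. -/
lemma pre_cert (y : ℕ) (hdy : C.d y = C.m + 1) (hdy1 : C.d (y+1) = C.m)
    (hy1n : y + 1 < C.n) (hag : ∀ j < y, C.d (y-1-j) = C.d (y+2+j))
    (hJ : 2*y + 2 < C.n) : False := by
  apply C.cert_down (y+1) (by omega) hy1n (by simpa using hdy) (by simpa using hdy1) y
  · intro j hj
    have e1 : y + 1 - 2 - j = y - 1 - j := by omega
    have e2 : y + 1 + 1 + j = y + 2 + j := by omega
    rw [e1, e2]
    exact hag j hj
  · left
    constructor <;> omega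

/-- Difference certificate at the separator right of gap ending at `y`. -/
lemma diff_cert (y J : ℕ) (hdy : C.d y = C.m + 1) (hdy1 : C.d (y+1) = C.m)
    (hy1n : y + 1 < C.n) (hag : ∀ j < J, C.d (y-1-j) = C.d (y+2+j))
    (hJy : J < y) (hJn : J < C.n - y - 2)
    (hlet : C.d (y+2+J) = C.m) (hlet2 : C.d (y-1-J) = C.m + 1) : False := by
  apply C.cert_down (y+1) (by omega) hy1n (by simpa using hdy) (by simpa using hdy1) J
  · intro j hj
    have e1 : y + 1 - 2 - j = y - 1 - j := by omega
    have e2 : y + 1 + 1 + j = y + 2 + j := by omega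
    rw [e1, e2]
    exact hag j hj
  · right
    refine ⟨by omega, by omega, ?_⟩
    have e1 : y + 1 - 2 - J = y - 1 - J := by omega
    have e2 : y + 1 + 1 + J = y + 2 + J := by omega
    rw [e1, e2, hlet, hlet2]

/-- Ascent certificate: a long `m`-run to the left of the one at `ξ`,
with a short run on its right. -/
lemma asc_cert (ξ lx2 EL : ℕ) (h1 : 1 ≤ ξ) (hξn : ξ < C.n)
    (hlet : ∀ k, lx2 ≤ k → k < ξ → C.d k = C.m) (hdξ : C.d ξ = C.m + 1)
    (hEL1 : ∀ i, 1 ≤ i → i ≤ EL → C.d (ξ+i) = C.m) (hEL2 : C.d (ξ+EL+1) = C.m + 1)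
    (hELn : ξ + EL + 1 < C.n) (hAL : EL + 2 ≤ ξ - lx2) : False := by
  apply C.cert_up ξ h1 hξn (hlet (ξ-1) (by omega) (by omega)) hdξ EL
  · intro j hj
    have e1 : C.d (ξ - 2 - j) = C.m := hlet (ξ-2-j) (by omega) (by omega)
    have e2 : C.d (ξ + 1 + j) = C.m := by
      have := hEL1 (j+1) (by omega) (by omega)
      have e : ξ + (j+1) = ξ + 1 + j := by omega
      rwa [e] at this
    rw [e1, e2]
  · right
    refine ⟨by omega, by omega, ?_⟩
    have e1 : C.d (ξ - 2 - EL) = C.m := hlet (ξ-2-EL) (by omega) (by omega)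
    have e2 : C.d (ξ + 1 + EL) = C.m + 1 := by
      have e : ξ + EL + 1 = ξ + 1 + EL := by omega
      rwa [e] at hEL2
    rw [e1, e2]

end Cfg

/-- The directional statement, parameterized by the distance measure. -/
def DLP (μ : ℕ) : Prop :=
  ∀ (C : Cfg) (x y x' y' : ℕ), C.IsGap x y → C.IsGap x' y' → y ≤ x' →
    (y - x) + 2 ≤ (y' - x') → x' + y' ≤ μ + (x + y) → False

namespace Cfg

variable (C : Cfg)

/-- Recursion on a mirrored pair: a long gap `[u,v)` to the left of a short gap `[x,y)`. -/
lemma rec_left_long (μ : ℕ) (IH : ∀ μ', μ' < μ → DLP μ') (u v x y : ℕ)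
    (gL : C.IsGap u v) (g1 : C.IsGap x y) (hvx : v ≤ x)
    (himb : (y - x) + 2 ≤ v - u) (hμ' : (x + y) - (u + v) < μ) : False := by
  have huv : u ≤ v := gL.1
  have hvn : v ≤ C.n := gL.2.1
  have hxy : x ≤ y := g1.1
  have hyn : y ≤ C.n := g1.2.1
  exact IH ((x+y) - (u+v)) hμ' C.mirror (C.n - y) (C.n - x) (C.n - v) (C.n - u)
    (C.IsGap_mirror g1) (C.IsGap_mirror gL) (by omega) (by omega) (by omega)

end Cfg

namespace Cfg

/-- The inner tie-walk. -/
lemma walk (C : Cfg) (μ : ℕ) (IH : ∀ μ', μ' < μ → DLP μ')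
    (x y x' y' : ℕ) (g1 : C.IsGap x y) (g2 : C.IsGap x' y')
    (himb : (y - x) + 2 ≤ y' - x') (hμ : x' + y' ≤ μ + (x + y))
    (hdy1 : C.d (y+1) = C.m) :
    ∀ ν ξ η D EL,
    ξ + (D + 1) = y → η = y + 2 + D →
    C.d ξ = C.m + 1 → C.d η = C.m + 1 → η < x' →
    (∀ j, j ≤ D → C.d (y-1-j) = C.d (y+2+j)) →
    y - x ≤ EL → EL ≤ (y - x) + 1 →
    (∀ i, 1 ≤ i → i ≤ EL → C.d (ξ + i) = C.m) →
    C.d (ξ + EL + 1) = C.m + 1 → ξ + EL + 1 < C.n →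
    y - x ≤ D → x' ≤ η + ν → False := by
  intro ν
  induction ν using Nat.strong_induction_on with
  | _ ν ihw =>
  intro ξ η D EL hξD hη hdξ hdη hηx AGR hEL0 hEL1 hHL1 hHL2 hHLn hAD hν
  have hxy : x ≤ y := g1.1
  have hyn : y ≤ C.n := g1.2.1
  have hx'y' : x' + 2 ≤ y' := by omega
  have hy'n : y' ≤ C.n := g2.2.1
  have hx'n : x' < C.n := by omega
  have hyn' : y < C.n := by omega
  have hdy : C.d y = C.m + 1 := by
    rcases g1.2.2.2.2 with h | h
    · omega
    · exact h
  have hG2let : ∀ k, x' ≤ k → k < y' → C.d k = C.m := g2.2.2.1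
  by_cases hfin : η + 1 = x'
  · -- FINAL: the right pointer reached the long gap
    by_cases hξ0 : ξ = 0
    · -- left word exhausted: prefix certificate
      apply C.pre_cert y hdy hdy1 (by omega)
      · intro j hj
        exact AGR j (by omega)
      · -- 2y + 2 < n : indeed 2y+2 = η+1 = x' ≤ n - 1
        omega
    · obtain ⟨lx2, hlx2, hLlet, hLb⟩ := C.gap_left ξ ξ (by omega) (le_refl ξ)
      by_cases hALB : ξ - lx2 < y' - x'
      · -- descent certificate with J = D + 1 + AL
        have hag : ∀ j < D + 1 + (ξ - lx2), C.d (y-1-j) = C.d (y+2+j) := by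
          intro j hj
          rcases le_or_gt j D with h | h
          · exact AGR j h
          · have e1 : y - 1 - j = ξ - 1 - (j - D - 1) := by omega
            have e2 : y + 2 + j = x' + (j - D - 1) := by omega
            rw [e1, e2, hLlet _ (by omega) (by omega), hG2let _ (by omega) (by omega)]
        by_cases hlx0 : lx2 = 0
        · apply C.pre_cert y hdy hdy1 (by omega)
          · intro j hj
            exact hag j (by omega)
          · -- position y+2+y = x' + AL ≤ y' - 1 ≤ n - 1
            omega
        · apply C.diff_cert y (D + 1 + (ξ - lx2)) hdy hdy1 (by omega) hag (by omega) (by omega)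
          · have e2 : y + 2 + (D + 1 + (ξ - lx2)) = x' + (ξ - lx2) := by omega
            rw [e2]
            exact hG2let _ (by omega) (by omega)
          · have e1 : y - 1 - (D + 1 + (ξ - lx2)) = lx2 - 1 := by omega
            rw [e1]
            rcases hLb with h | h
            · omega
            · exact h
      · -- AL ≥ B : long gap found on the left
        by_cases hcert : EL + 2 ≤ ξ - lx2
        · exact C.asc_cert ξ lx2 EL (by omega) (by omega) hLlet hdξ hHL1 hHL2 hHLn hcert
        · apply C.rec_left_long μ IH lx2 ξ x y
            ⟨hlx2, by omega, hLlet, hLb, Or.inr hdξ⟩ g1 (by omega) (by omega) (by omega)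
  · -- CONTINUE
    obtain ⟨ry, hry1, hry2, hRlet, hRb⟩ := C.gap_right C.n (η+1) (by omega) (by omega)
    have gapR : C.IsGap (η+1) ry := by
      refine ⟨hry1, hry2, hRlet, Or.inr ?_, hRb⟩
      simpa using hdη
    have hryx' : ry ≤ x' := C.gap_disj gapR g2 (by omega)
    have hrylt : ry < x' := by
      rcases Nat.eq_or_lt_of_le hryx' with h | h
      · exfalso
        have h1 : C.d ry = C.m + 1 := by
          rcases hRb with hh | hh
          · omega
          · exact hh
        have h2 : C.d ry = C.m := by
          rw [h]
          exact hG2let x' (le_refl x') (by omega)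
        omega
      · exact h
    have hdry : C.d ry = C.m + 1 := by
      rcases hRb with hh | hh
      · omega
      · exact hh
    by_cases hAR1 : ry - (η+1) ≤ y - x
    · -- short right gap: recurse on (R, G2)
      exact IH (x' + y' - (η + 1 + ry)) (by omega) C (η+1) ry x' y' gapR g2 hryx'
        (by omega) (by omega)
    · by_cases hAR2 : ry - (η+1) = (y - x) + 1
      · -- tie block on the right
        by_cases hξ0 : ξ = 0
        · apply C.pre_cert y hdy hdy1 (by omega)
          · intro j hj
            exact AGR j (by omega)
          · omega
        · obtain ⟨lx2, hlx2, hLlet, hLb⟩ := C.gap_left ξ ξ (by omega) (le_refl ξ)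
          by_cases hAL1 : ξ - lx2 ≤ y - x
          · -- left block shorter: descent certificate, J = D + 1 + AL
            have hag : ∀ j < D + 1 + (ξ - lx2), C.d (y-1-j) = C.d (y+2+j) := by
              intro j hj
              rcases le_or_gt j D with h | h
              · exact AGR j h
              · have e1 : y - 1 - j = ξ - 1 - (j - D - 1) := by omega
                have e2 : y + 2 + j = (η + 1) + (j - D - 1) := by omega
                rw [e1, e2, hLlet _ (by omega) (by omega), hRlet _ (by omega) (by omega)]
            by_cases hlx0 : lx2 = 0
            · apply C.pre_cert y hdy hdy1 (by omega)
              · intro j hj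
                exact hag j (by omega)
              · omega
            · apply C.diff_cert y (D + 1 + (ξ - lx2)) hdy hdy1 (by omega) hag (by omega) (by omega)
              · have e2 : y + 2 + (D + 1 + (ξ - lx2)) = (η + 1) + (ξ - lx2) := by omega
                rw [e2]
                exact hRlet _ (by omega) (by omega)
              · have e1 : y - 1 - (D + 1 + (ξ - lx2)) = lx2 - 1 := by omega
                rw [e1]
                rcases hLb with h | h
                · omega
                · exact h
          · by_cases hAL2 : ξ - lx2 = (y - x) + 1
            · -- both blocks tie: extend the walk or prefix-terminate
              by_cases hlx0 : lx2 = 0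
              · apply C.pre_cert y hdy hdy1 (by omega)
                · intro j hj
                  rcases le_or_gt j D with h | h
                  · exact AGR j h
                  · have e1 : y - 1 - j = ξ - 1 - (j - D - 1) := by omega
                    have e2 : y + 2 + j = (η + 1) + (j - D - 1) := by omega
                    rw [e1, e2, hLlet _ (by omega) (by omega), hRlet _ (by omega) (by omega)]
                · omega
              · -- walk step
                apply ihw (ν - ((y - x) + 2)) (by omega) (lx2 - 1) ry (D + (y - x) + 2) ((y - x) + 1)
                · omega
                · omega
                · rcases hLb with h | h
                  · omega
                  · exact h
                · exact hdry
                · exact hrylt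
                · -- extended agreement
                  intro j hj
                  rcases le_or_gt j D with h | h
                  · exact AGR j h
                  · rcases Nat.lt_or_ge j (D + (y-x) + 2) with h2 | h2
                    · have e1 : y - 1 - j = ξ - 1 - (j - D - 1) := by omega
                      have e2 : y + 2 + j = (η + 1) + (j - D - 1) := by omega
                      rw [e1, e2, hLlet _ (by omega) (by omega), hRlet _ (by omega) (by omega)]
                    · -- j = D' : both separators
                      have hj' : j = D + (y-x) + 2 := by omega
                      have e1 : y - 1 - j = lx2 - 1 := by omega
                      have e2 : y + 2 + j = ry := by omega
                      rw [e1, e2, hdry]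
                      rcases hLb with h | h
                      · omega
                      · exact h
                · omega
                · omega
                · -- new HL block letters
                  intro i hi1 hi2
                  have e : lx2 - 1 + i = lx2 + (i - 1) := by omega
                  rw [e]
                  exact hLlet _ (by omega) (by omega)
                · -- new HL boundary
                  have e : lx2 - 1 + ((y-x)+1) + 1 = ξ := by omega
                  rw [e]
                  exact hdξ
                · -- boundary position < n
                  have e : lx2 - 1 + ((y-x)+1) + 1 = ξ := by omega
                  omega
                · omega
                · omega
            · -- AL ≥ A + 2 : long gap on the left
              by_cases hcert : EL + 2 ≤ ξ - lx2
              · exact C.asc_cert ξ lx2 EL (by omega) (by omega) hLlet hdξ hHL1 hHL2 hHLn hcert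
              · apply C.rec_left_long μ IH lx2 ξ x y
                  ⟨hlx2, by omega, hLlet, hLb, Or.inr hdξ⟩ g1 (by omega) (by omega) (by omega)
      · -- AR ≥ A + 2 : recurse on (G1, R)
        exact IH ((η + 1 + ry) - (x + y)) (by omega) C x y (η+1) ry g1 gapR (by omega)
          (by omega) (by omega)


end Cfg

/-- The directional lemma: no short gap left of a ≥2-longer gap. -/
theorem DL : ∀ μ, DLP μ := by
  intro μ
  induction μ using Nat.strong_induction_on with
  | _ μ IH =>
  intro C x y x' y' g1 g2 hor himb hμ
  have hxy : x ≤ y := g1.1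
  have hyn : y ≤ C.n := g1.2.1
  have hx'y' : x' + 2 ≤ y' := by omega
  have hy'n : y' ≤ C.n := g2.2.1
  have hG2let : ∀ k, x' ≤ k → k < y' → C.d k = C.m := g2.2.2.1
  have hylt : y < x' := by
    rcases Nat.eq_or_lt_of_le hor with h | h
    · exfalso
      have h1 : C.d y = C.m + 1 := by
        rcases g1.2.2.2.2 with hh | hh
        · omega
        · exact hh
      have h2 : C.d y = C.m := by
        rw [h]; exact hG2let x' (le_refl x') (by omega)
      omega
    · exact h
  have hdy : C.d y = C.m + 1 := by
    rcases g1.2.2.2.2 with hh | hh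
    · omega
    · exact hh
  by_cases hadj : y + 1 = x'
  · -- adjacent case: direct certificate
    have hdy1 : C.d (y+1) = C.m := by
      rw [hadj]; exact hG2let x' (le_refl x') (by omega)
    have hag : ∀ j < y - x, C.d (y-1-j) = C.d (y+2+j) := by
      intro j hj
      have e2 : y + 2 + j = x' + (1 + j) := by omega
      rw [e2, g1.2.2.1 (y-1-j) (by omega) (by omega), hG2let _ (by omega) (by omega)]
    by_cases hx0 : x = 0
    · apply C.pre_cert y hdy hdy1 (by omega)
      · intro j hj
        exact hag j (by omega)
      · omega
    · apply C.diff_cert y (y - x) hdy hdy1 (by omega) hag (by omega) (by omega)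
      · have e2 : y + 2 + (y - x) = x' + (1 + (y - x)) := by omega
        rw [e2]
        exact hG2let _ (by omega) (by omega)
      · have e1 : y - 1 - (y - x) = x - 1 := by omega
        rw [e1]
        rcases g1.2.2.2.1 with h | h
        · omega
        · exact h
  · -- distance ≥ 2: examine the gap right of the separator at y
    obtain ⟨y3, hy31, hy32, hG3let, hG3b⟩ := C.gap_right C.n (y+1) (by omega) (by omega)
    have gapG3 : C.IsGap (y+1) y3 := by
      refine ⟨hy31, hy32, hG3let, Or.inr ?_, hG3b⟩
      simpa using hdy
    have hy3x' : y3 ≤ x' := C.gap_disj gapG3 g2 (by omega)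
    have hy3lt : y3 < x' := by
      rcases Nat.eq_or_lt_of_le hy3x' with h | h
      · exfalso
        have h1 : C.d y3 = C.m + 1 := by
          rcases hG3b with hh | hh
          · omega
          · exact hh
        have h2 : C.d y3 = C.m := by
          rw [h]; exact hG2let x' (le_refl x') (by omega)
        omega
      · exact h
    have hdy3 : C.d y3 = C.m + 1 := by
      rcases hG3b with hh | hh
      · omega
      · exact hh
    by_cases hC1 : y3 - (y+1) ≤ y - x
    · exact IH (x' + y' - (y + 1 + y3)) (by omega) C (y+1) y3 x' y' gapG3 g2 hy3x'
        (by omega) (by omega)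
    · by_cases hC2 : y3 - (y+1) = (y - x) + 1
      · have hdy1 : C.d (y+1) = C.m := hG3let (y+1) (le_refl (y+1)) (by omega)
        by_cases hx0 : x = 0
        · apply C.pre_cert y hdy hdy1 (by omega)
          · intro j hj
            rw [g1.2.2.1 (y-1-j) (by omega) (by omega),
                hG3let (y+2+j) (by omega) (by omega)]
          · omega
        · -- enter the walk
          apply C.walk μ IH x y x' y' g1 g2 himb hμ hdy1 (x' - y3) (x-1) y3 (y-x) (y-x)
          · omega
          · omega
          · have e : x - 1 = x - 1 := rfl
            rcases g1.2.2.2.1 with h | h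
            · omega
            · exact h
          · exact hdy3
          · exact hy3lt
          · intro j hj
            rcases Nat.lt_or_ge j (y - x) with h | h
            · rw [g1.2.2.1 (y-1-j) (by omega) (by omega),
                  hG3let (y+2+j) (by omega) (by omega)]
            · have hj' : j = y - x := by omega
              have e1 : y - 1 - j = x - 1 := by omega
              have e2 : y + 2 + j = y3 := by omega
              rw [e1, e2, hdy3]
              rcases g1.2.2.2.1 with h | h
              · omega
              · exact h
          · omega
          · omega
          · intro i hi1 hi2
            exact g1.2.2.1 (x-1+i) (by omega) (by omega)
          · have e : x - 1 + (y - x) + 1 = y := by omega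
            rw [e]
            exact hdy
          · omega
          · omega
          · omega
      · -- C3 ≥ A + 2
        exact IH ((y + 1 + y3) - (x + y)) (by omega) C x y (y+1) y3 g1 gapG3 (by omega)
          (by omega) (by omega)

namespace Cfg

/-- Main combinatorial lemma: any two maximal `m`-runs have lengths within 1. -/
theorem MCL (C : Cfg) (x y x' y' : ℕ) (g1 : C.IsGap x y) (g2 : C.IsGap x' y')
    (himb : (y - x) + 2 ≤ y' - x') : False := by
  have hxy : x ≤ y := g1.1
  have hyn : y ≤ C.n := g1.2.1
  have hx'y' : x' ≤ y' := g2.1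
  have hy'n : y' ≤ C.n := g2.2.1
  rcases Nat.lt_trichotomy x x' with h | h | h
  · exact DL (x' + y') C x y x' y' g1 g2 (C.gap_disj g1 g2 h) himb (by omega)
  · subst h
    -- same start: gaps must coincide
    rcases Nat.lt_trichotomy y y' with h2 | h2 | h2
    · have h1 : C.d y = C.m + 1 := by
        rcases g1.2.2.2.2 with hh | hh
        · omega
        · exact hh
      have hx'le : x ≤ y := g1.1
      have h3 : C.d y = C.m := g2.2.2.1 y (by omega) (by omega)
      omega
    · omega
    · have h1 : C.d y' = C.m + 1 := by
        rcases g2.2.2.2.2 with hh | hh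
        · omega
        · exact hh
      have h3 : C.d y' = C.m := g1.2.2.1 y' (by omega) (by omega)
      omega
  · -- long gap strictly left of short gap: mirror
    have hor : y' ≤ x := C.gap_disj g2 g1 h
    exact DL ((C.n - y') + (C.n - x')) C.mirror (C.n - y) (C.n - x) (C.n - y') (C.n - x')
      (C.IsGap_mirror g1) (C.IsGap_mirror g2) (by omega) (by omega) (by omega)

end Cfg


/-- Proposition 5.2(ii): if `(r-1) ∤ (s-1)`, `g ≡ s-1 mod (r-1)` is the least positive
residue, `d ∈ Biv*(s,r)` (entries in `{[q], [q]+1}`, summing to `s-1`, first and last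
entries `[q]`) with `h_p(δ⁻¹(d)) = min h_p`, and `2g ≤ r-2`, then `θ_max(d) = 1` (every
maximal `[q]+1`-block of `d` is a singleton) and `η(d) = η_max(d) - η_min(d) ≤ 1` (the
lengths of any two maximal `[q]`-blocks differ by at most 1). -/
theorem stmt14 (p s r : ℕ) (hpp : p.Prime) (hp3 : 3 ≤ p) (hr : 3 ≤ r) (hrs : r < s)
    (hndvd1 : ¬ (r - 1) ∣ (s - 1))
    (g : ℕ) (hgdef : g = (s - 1) % (r - 1)) (hg : 2 * g ≤ r - 2)
    (fq : ℤ) (hfq : fq = (((s - 1) / (r - 1) : ℕ) : ℤ))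
    (d : ℕ → ℤ)
    (hmem : ∀ j < r - 1, d j = fq ∨ d j = fq + 1)
    (hsum : ∑ j ∈ Finset.range (r - 1), d j = (s : ℤ) - 1)
    (hframe : d 0 = fq ∧ d (r - 2) = fq)
    (hmin : ∀ b : ℕ → ℤ, Admissible s r b → hp p r (deltaInv d) ≤ hp p r b) :
    (∀ i l, IsMaxRun (r - 1) d (fq + 1) i l → l = 1) ∧
    (∀ i l i' l', IsMaxRun (r - 1) d fq i l → IsMaxRun (r - 1) d fq i' l' →
      l ≤ l' + 1) := by
  have hm1 : 1 ≤ fq := by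
    rw [hfq]
    have h1 : 1 ≤ (s - 1) / (r - 1) := (Nat.one_le_div_iff (by omega)).mpr (by omega)
    exact_mod_cast h1
  set C : Cfg :=
    { p := p, s := s, r := r, n := r - 1, m := fq, d := d,
      hp3 := hp3, hn := rfl, hr := hr, hm := hm1,
      hd := hmem, hsum := hsum, hmin := hmin } with hC
  have hCd : C.d = d := rfl
  have hCm : C.m = fq := rfl
  have hCn : C.n = r - 1 := rfl
  set n := r - 1 with hn
  -- conversion of a maximal fq-run to a gap
  have run_gap : ∀ i l, IsMaxRun n d fq i l → C.IsGap i (i + l) := by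
    intro i l hrun
    obtain ⟨hl, hln, hlet, hbl, hbr⟩ := hrun
    refine ⟨by omega, by rw [hCn]; omega, ?_, ?_, ?_⟩
    · intro k h1 h2
      have := hlet (k - i) (by omega)
      rw [show i + (k - i) = k by omega] at this
      exact this
    · rcases Nat.eq_zero_or_pos i with h | h
      · exact Or.inl h
      · right
        rcases hmem (i-1) (by omega) with hh | hh
        · exact absurd hh (hbl h)
        · exact hh
    · by_cases h : i + l = n
      · left; rw [hCn]; exact h
      · right
        rcases hmem (i+l) (by omega) with hh | hh
        · exact absurd hh (hbr (by omega))
        · exact hh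
  constructor
  · -- part 1 : every (fq+1)-run is a singleton
    intro i l hrun
    by_contra hne
    obtain ⟨hl, hln, hlet, hbl, hbr⟩ := hrun
    have hl2 : 2 ≤ l := by omega
    have hdi : d i = fq + 1 := by simpa using hlet 0 (by omega)
    have hdi1 : d (i+1) = fq + 1 := hlet 1 (by omega)
    have gap0 : C.IsGap (i+1) (i+1) := by
      refine ⟨le_refl _, by rw [hCn]; omega, ?_, Or.inr ?_, Or.inr ?_⟩
      · intro k h1 h2; omega
      · simpa using hdi
      · exact hdi1
    -- counting: there exist two adjacent fq's
    have hOcard : (Finset.filter (fun j => d j = fq + 1) (Finset.range n)).card = g := by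
      have hsum2 : ∑ j ∈ Finset.range n, d j
          = ∑ j ∈ Finset.range n, (fq + (if d j = fq + 1 then (1:ℤ) else 0)) := by
        apply Finset.sum_congr rfl
        intro j hj
        simp only [Finset.mem_range] at hj
        rcases hmem j (by omega) with hh | hh
        · rw [hh]
          simp [hh, show fq ≠ fq + 1 by omega]
        · simp [hh]
      rw [Finset.sum_add_distrib, Finset.sum_const, Finset.card_range] at hsum2
      have hsum3 : ∑ j ∈ Finset.range n, (if d j = fq + 1 then (1:ℤ) else 0)
          = ((Finset.filter (fun j => d j = fq + 1) (Finset.range n)).card : ℤ) := by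
        rw [Finset.sum_boole]
      rw [hsum3] at hsum2
      rw [hsum] at hsum2
      have hdm := Nat.div_add_mod (s-1) n
      have hdmz : ((n:ℕ):ℤ) * (((s-1)/n : ℕ):ℤ) + (((s-1) % n : ℕ):ℤ) = ((s-1:ℕ):ℤ) := by
        exact_mod_cast hdm
      have hs1 : ((s-1:ℕ):ℤ) = (s:ℤ) - 1 := by omega
      rw [hs1, ← hfq] at hdmz
      rw [nsmul_eq_mul] at hsum2
      have hcg : ((Finset.filter (fun j => d j = fq + 1) (Finset.range n)).card : ℤ)
          = (((s-1) % n : ℕ) : ℤ) := by linarith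
      rw [hgdef]
      exact_mod_cast hcg
    have hg1 : 1 ≤ g := by
      rcases Nat.eq_zero_or_pos g with h | h
      · exfalso
        apply hndvd1
        apply Nat.dvd_of_mod_eq_zero
        omega
      · exact h
    have h00 : ∃ j, j + 1 < n ∧ d j = fq ∧ d (j+1) = fq := by
      by_contra hcon
      push_neg at hcon
      set O := Finset.filter (fun j => d j = fq + 1) (Finset.range n) with hO
      set Z1 := Finset.filter (fun k => d k = fq ∧ 1 ≤ k) (Finset.range n) with hZ1
      have hmap : ∀ k ∈ Z1, k - 1 ∈ O.erase i := by
        intro k hk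
        simp only [hZ1, Finset.mem_filter, Finset.mem_range] at hk
        obtain ⟨hkn, hdk, hk1⟩ := hk
        have hdk1 : d (k-1) = fq + 1 := by
          rcases hmem (k-1) (by omega) with hh | hh
          · exfalso
            rcases Nat.eq_or_lt_of_le hk1 with h | h
            · -- k = 1 : d 0 = fq and d 1 = fq would be 00 at 0... need k < n
              apply hcon (k-1) (by omega)
              · exact hh
              · rw [show k - 1 + 1 = k by omega]; exact hdk
            · apply hcon (k-1) (by omega)
              · exact hh
              · rw [show k - 1 + 1 = k by omega]; exact hdk
          · exact hh
        simp only [Finset.mem_erase, hO, Finset.mem_filter, Finset.mem_range]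
        refine ⟨?_, by omega, hdk1⟩
        intro hki
        have : k = i + 1 := by omega
        rw [this] at hdk
        omega
      have hinj : Set.InjOn (fun k => k - 1) Z1 := by
        intro k1 h1 k2 h2 he
        simp only [hZ1, Finset.mem_filter, Finset.mem_range, Finset.coe_filter] at h1 h2
        simp only [Set.mem_setOf_eq] at h1 h2
        simp only at he
        omega
      have hcard1 : Z1.card ≤ (O.erase i).card := Finset.card_le_card_of_injOn _ hmap hinj
      have hiO : i ∈ O := by
        simp only [hO, Finset.mem_filter, Finset.mem_range]
        exact ⟨by omega, hdi⟩
      have hcard2 : (O.erase i).card = g - 1 := by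
        rw [Finset.card_erase_of_mem hiO, hOcard]
      -- lower bound on Z1
      have hpart : ∀ j ∈ Finset.range n, j ∉ O → (d j = fq ∧ 1 ≤ j) ∨ j = 0 := by
        intro j hj hjO
        simp only [hO, Finset.mem_filter, Finset.mem_range] at hjO
        simp only [Finset.mem_range] at hj
        rcases hmem j (by omega) with hh | hh
        · rcases Nat.eq_zero_or_pos j with h | h
          · exact Or.inr h
          · exact Or.inl ⟨hh, h⟩
        · exact absurd ⟨hj, hh⟩ hjO
      have hsub : Finset.range n ⊆ O ∪ Z1 ∪ {0} := by
        intro j hj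
        simp only [Finset.mem_union, Finset.mem_singleton]
        by_cases hjO : j ∈ O
        · exact Or.inl (Or.inl hjO)
        · rcases hpart j hj hjO with ⟨h1, h2⟩ | h
          · left; right
            simp only [hZ1, Finset.mem_filter]
            exact ⟨hj, h1, h2⟩
          · exact Or.inr h
      have hcards : n ≤ O.card + Z1.card + 1 := by
        calc n = (Finset.range n).card := (Finset.card_range n).symm
        _ ≤ (O ∪ Z1 ∪ {0}).card := Finset.card_le_card hsub
        _ ≤ (O ∪ Z1).card + ({0} : Finset ℕ).card := Finset.card_union_le _ _
        _ ≤ O.card + Z1.card + 1 := by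
            have := Finset.card_union_le O Z1
            simp only [Finset.card_singleton]
            omega
      rw [hOcard] at hcards
      omega
    obtain ⟨j, hjn, hdj, hdj1⟩ := h00
    obtain ⟨u, hu1, hu2, hu3⟩ := C.gap_left n j (by rw [hCn]; omega) (by omega)
    obtain ⟨v, hv1, hv2, hv3, hv4⟩ := C.gap_right C.n j (by rw [hCn]; omega) (by omega)
    have hv5 : j + 2 ≤ v := by
      by_contra hcon2
      push_neg at hcon2
      have hvn : v < C.n := by rw [hCn]; omega
      have hdv : C.d v = C.m + 1 := by
        rcases hv4 with h | h
        · omega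
        · exact h
      have hdv2 : C.d v = C.m := by
        rcases Nat.eq_or_lt_of_le hv1 with h | h
        · rw [hCd, hCm, ← h]; exact hdj
        · rw [hCd, hCm, show v = j + 1 by omega]; exact hdj1
      omega
    have gapUV : C.IsGap u v := by
      refine ⟨by omega, hv2, ?_, hu3, hv4⟩
      intro k h1 h2
      rcases Nat.lt_or_ge k j with h | h
      · exact hu2 k h1 h
      · exact hv3 k h h2
    exact absurd (C.MCL (i+1) (i+1) u v gap0 gapUV (by omega)) (fun x => x)
  · -- part 2 : fq-runs are balanced
    intro i l i' l' h1 h2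
    by_contra hcon
    push_neg at hcon
    exact C.MCL i' (i' + l') i (i + l) (run_gap i' l' h2) (run_gap i l h1) (by omega)
end
end
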